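/- arXiv:1701.08046 — 6 statements merged into one kernel-verified Lean document; each statement's English description precedes it below -/
import Mathlib

section
/- In particular, if for some index n₀ the finite-dimensional resolvent Krylov subspace 𝒦_{n₀}((γ-A)^{-1}, v) = span{v, (γ-A)^{-1}v, ..., (γ-A)^{-(n₀-1)}v} is invariant under (γ-A)^{-1}, then for every t ≥ 0 the vector e^{tA}v lies in 𝒦_{n₀}((γ-A)^{-1}, v) exactly. -/
open Filter Topology MeasureTheory

/-- A (bounded) strongly continuous one-parameter semigroup on `X` with bound `N`. -/
structure IsC0Semigroup {X : Type*} [NormedAddCommGroup X] [NormedSpace ℂ X]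
    (T : ℝ → X →L[ℂ] X) (N : ℝ) : Prop where
  map_zero : T 0 = 1
  map_add : ∀ s t : ℝ, 0 ≤ s → 0 ≤ t → T (s + t) = (T s).comp (T t)
  strong_cont : ∀ x : X, ContinuousOn (fun t => T t x) (Set.Ici 0)
  norm_bound : ∀ t : ℝ, 0 ≤ t → ‖T t‖ ≤ N

/-- `A` (a linear extension of) the generator of the semigroup `T`, with domain `dom`. -/
structure IsGeneratorOf {X : Type*} [NormedAddCommGroup X] [NormedSpace ℂ X]
    (A : X →ₗ[ℂ] X) (dom : Set X) (T : ℝ → X →L[ℂ] X) : Prop where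
  deriv_mem : ∀ x ∈ dom,
    Tendsto (fun t : ℝ => (t : ℂ)⁻¹ • (T t x - x)) (𝓝[>] 0) (𝓝 (A x))
  mem_of_deriv : ∀ x y : X,
    Tendsto (fun t : ℝ => (t : ℂ)⁻¹ • (T t x - x)) (𝓝[>] 0) (𝓝 y) → x ∈ dom

/-- `R = (μ - A)⁻¹` : the resolvent of `A` at `μ`. -/
def IsResolventOf {X : Type*} [NormedAddCommGroup X] [NormedSpace ℂ X]
    (R : X →L[ℂ] X) (μ : ℂ) (A : X →ₗ[ℂ] X) (dom : Set X) : Prop :=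
  (∀ x : X, R x ∈ dom ∧ μ • R x - A (R x) = x) ∧
  (∀ x ∈ dom, R (μ • x - A x) = x)


noncomputable def stmt6Exp {E : Type*} [NormedAddCommGroup E] [NormedSpace ℂ E]
    [CompleteSpace E] (B : E →L[ℂ] E) (s : ℝ) : E →L[ℂ] E :=
  NormedSpace.exp ((s : ℂ) • B)

lemma stmt6Exp_zero {E : Type*} [NormedAddCommGroup E] [NormedSpace ℂ E]
    [CompleteSpace E] (B : E →L[ℂ] E) : stmt6Exp B 0 = 1 := by
  simp [stmt6Exp, NormedSpace.exp_zero]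

lemma stmt6Exp_hasDerivAt {E : Type*} [NormedAddCommGroup E] [NormedSpace ℂ E]
    [CompleteSpace E] (B : E →L[ℂ] E) (x : E) (s : ℝ) :
    HasDerivAt (fun u : ℝ => stmt6Exp B u x) (B (stmt6Exp B s x)) s := by
  have h1 : HasDerivAt (fun z : ℂ => NormedSpace.exp (z • B))
      (NormedSpace.exp ((s : ℂ) • B) * B) (s : ℂ) :=
    hasDerivAt_exp_smul_const B (s : ℂ)
  have h2 : HasDerivAt (fun z : ℂ => NormedSpace.exp (z • B) x)
      ((NormedSpace.exp ((s : ℂ) • B) * B) x) (s : ℂ) := by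
    simpa using h1.clm_apply (hasDerivAt_const _ x)
  have h3 : HasDerivAt (fun u : ℝ => NormedSpace.exp ((u : ℂ) • B) x)
      ((NormedSpace.exp ((s : ℂ) • B) * B) x) s := by
    have h2' := (h2.hasFDerivAt.restrictScalars ℝ).comp s Complex.ofRealCLM.hasFDerivAt
    have h2'' := h2'.hasDerivAt
    simpa [Function.comp_def] using h2''
  have hcomm := ((Commute.refl B).smul_right ((s : ℂ))).exp_right
  have h5 : (NormedSpace.exp ((s : ℂ) • B) * B) x
      = B (NormedSpace.exp ((s : ℂ) • B) x) := by
    rw [← hcomm.eq, ContinuousLinearMap.mul_apply]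
  rw [h5] at h3
  exact h3

set_option maxHeartbeats 1000000 in
set_option synthInstance.maxHeartbeats 400000 in
/-- If the finite-dimensional resolvent Krylov subspace
`𝒦_{n₀} = span{v, (γ-A)^{-1}v, ..., (γ-A)^{-(n₀-1)}v}` is invariant under `(γ-A)^{-1}`,
then `e^{tA} v ∈ 𝒦_{n₀}` exactly, for every `t ≥ 0`. -/
theorem stmt_6 {X : Type*} [NormedAddCommGroup X] [NormedSpace ℂ X] [CompleteSpace X]
    (T : ℝ → X →L[ℂ] X) (N : ℝ) (hT : IsC0Semigroup T N)
    (A : X →ₗ[ℂ] X) (dom : Set X) (hA : IsGeneratorOf A dom T)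
    (γ : ℝ) (hγ : 0 < γ) (R : X →L[ℂ] X) (hR : IsResolventOf R (γ : ℂ) A dom)
    (v : X) (n₀ : ℕ) (hn₀ : 1 ≤ n₀)
    (K : Submodule ℂ X)
    (hK : K = Submodule.span ℂ (Set.range fun k : Fin n₀ => (R ^ (k : ℕ)) v))
    (hinv : ∀ x ∈ K, R x ∈ K) :
    ∀ t : ℝ, 0 ≤ t → T t v ∈ K := by
  classical
  have hvK : v ∈ K := by
    rw [hK]
    exact Submodule.subset_span ⟨⟨0, hn₀⟩, by simp⟩
  have hRinj : Function.Injective R := by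
    intro x y hxy
    have hx := (hR.1 x).2
    have hy := (hR.1 y).2
    rw [hxy] at hx
    exact hx.symm.trans hy
  haveI hfin : FiniteDimensional ℂ K := by
    rw [hK]
    exact FiniteDimensional.span_of_finite ℂ (Set.finite_range _)
  set r : K →ₗ[ℂ] K := (R : X →ₗ[ℂ] X).restrict (fun x hx => hinv x hx) with hr
  have hrinj : Function.Injective r := by
    intro x y hxy
    apply Subtype.ext
    apply hRinj
    exact congrArg Subtype.val hxy
  have hrsurj : Function.Surjective r := LinearMap.injective_iff_surjective.mp hrinj
  have hKdom : ∀ x : X, x ∈ K → x ∈ dom ∧ A x ∈ K := by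
    intro x hx
    obtain ⟨y, hy⟩ := hrsurj ⟨x, hx⟩
    have hRy : R (y : X) = x := congrArg Subtype.val hy
    have h2 := (hR.1 (y : X)).2
    rw [hRy] at h2
    constructor
    · rw [← hRy]; exact (hR.1 (y : X)).1
    · have hAx : A x = (γ : ℂ) • x - (y : X) := by
        rw [← h2]; abel
      rw [hAx]
      exact K.sub_mem (K.smul_mem _ hx) y.2
  haveI : CompleteSpace K := FiniteDimensional.complete ℂ K
  set A' : K →ₗ[ℂ] K := A.restrict (fun x hx => (hKdom x hx).2) with hA'
  set A'' : K →L[ℂ] K := LinearMap.toContinuousLinearMap A' with hA''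
  have hA''coe : ∀ x : K, (A'' x : X) = A (x : X) := fun x => rfl
  set vK : K := ⟨v, hvK⟩ with hvKdef
  set w : ℝ → X := fun s => ((stmt6Exp A'' s) vK : X) with hwdef
  have hwK : ∀ s, w s ∈ K := fun s => ((stmt6Exp A'' s) vK).2
  have hwderiv : ∀ s : ℝ, HasDerivAt w (A (w s)) s := by
    intro s
    have h3 := stmt6Exp_hasDerivAt A'' vK s
    have h4 := ((K.subtypeL.restrictScalars ℝ).hasFDerivAt).comp_hasDerivAt s h3
    exact h4
  have hNb : ∀ σ : ℝ, 0 ≤ σ → ∀ y : X, ‖T σ y‖ ≤ N * ‖y‖ := fun σ hσ y =>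
    ((T σ).le_opNorm y).trans (mul_le_mul_of_nonneg_right (hT.norm_bound σ hσ) (norm_nonneg y))
  have horbit : ∀ (x : X), x ∈ dom → ∀ s : ℝ, 0 ≤ s →
      Tendsto (fun σ : ℝ => (σ - s)⁻¹ • (T σ x - T s x)) (𝓝[>] s) (𝓝 (T s (A x))) := by
    intro x hx s hs
    have hshift : Tendsto (fun σ : ℝ => σ - s) (𝓝[>] s) (𝓝[>] (0 : ℝ)) := by
      apply tendsto_nhdsWithin_of_tendsto_nhds_of_eventually_within
      · have : Tendsto (fun σ : ℝ => σ - s) (𝓝 s) (𝓝 (s - s)) :=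
          tendsto_id.sub tendsto_const_nhds
        rw [sub_self] at this
        exact this.mono_left nhdsWithin_le_nhds
      · filter_upwards [self_mem_nhdsWithin] with σ hσ
        exact sub_pos.mpr (show s < σ from hσ)
    have hgen := (hA.deriv_mem x hx).comp hshift
    have hcont : Tendsto (fun y => T s y) (𝓝 (A x)) (𝓝 (T s (A x))) := (T s).continuous.tendsto _
    apply (hcont.comp hgen).congr'
    filter_upwards [self_mem_nhdsWithin] with σ hσ
    have hcompT : T σ = (T s).comp (T (σ - s)) := by
      have h := hT.map_add s (σ - s) hs (le_of_lt (sub_pos.mpr hσ))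
      rwa [add_sub_cancel] at h
    have hsm : ∀ z : X, ((σ - s : ℝ) : ℂ)⁻¹ • z = (σ - s)⁻¹ • z := fun z => by
      rw [← Complex.coe_smul, Complex.ofReal_inv]
    show T s (((σ - s : ℝ) : ℂ)⁻¹ • (T (σ - s) x - x)) = (σ - s)⁻¹ • (T σ x - T s x)
    rw [_root_.map_smul, map_sub, hcompT, ContinuousLinearMap.comp_apply, hsm]
  intro t ht
  set f : ℝ → X := fun σ => T σ (w (t - σ)) with hfdef
  have hwcont : Continuous w := by
    have hca : ∀ s : ℝ, ContinuousAt w s := fun s => (hwderiv s).continuousAt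
    exact continuous_iff_continuousAt.mpr hca
  have hfcont : ContinuousOn f (Set.Icc 0 t) := by
    intro s hs
    have hs0 : 0 ≤ s := hs.1
    have key : Tendsto (fun σ => f σ - f s) (𝓝[Set.Icc 0 t] s) (𝓝 0) := by
      refine squeeze_zero_norm'
        (a := fun σ => N * ‖w (t - σ) - w (t - s)‖ + ‖T σ (w (t - s)) - T s (w (t - s))‖)
        ?_ ?_
      · filter_upwards [self_mem_nhdsWithin] with σ hσ
        have hσ0 : 0 ≤ σ := hσ.1
        have hsplit : f σ - f s
            = T σ (w (t - σ) - w (t - s)) + (T σ (w (t - s)) - T s (w (t - s))) := by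
          simp only [hfdef]
          rw [map_sub]; abel
        rw [hsplit]
        refine (norm_add_le _ _).trans ?_
        exact add_le_add_left (hNb σ hσ0 _) _
      · have h1 : Tendsto (fun σ => N * ‖w (t - σ) - w (t - s)‖) (𝓝[Set.Icc 0 t] s)
            (𝓝 (N * ‖w (t - s) - w (t - s)‖)) := by
          apply Tendsto.const_mul
          apply Tendsto.norm
          apply Tendsto.sub _ tendsto_const_nhds
          exact ((hwcont.comp (continuous_const.sub continuous_id)).tendsto s).mono_left
            nhdsWithin_le_nhds
        have h2 : Tendsto (fun σ => ‖T σ (w (t - s)) - T s (w (t - s))‖) (𝓝[Set.Icc 0 t] s)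
            (𝓝 ‖T s (w (t - s)) - T s (w (t - s))‖) := by
          apply Tendsto.norm
          apply Tendsto.sub _ tendsto_const_nhds
          exact ((hT.strong_cont (w (t - s)) s hs0).mono Set.Icc_subset_Ici_self :
            ContinuousWithinAt _ _ _)
        have := h1.add h2
        simpa using this
    have : Tendsto f (𝓝[Set.Icc 0 t] s) (𝓝 (f s)) := by
      have := key.add (tendsto_const_nhds (x := f s) (f := 𝓝[Set.Icc 0 t] s))
      simpa using this
    exact this
  have hfderiv : ∀ s ∈ Set.Ico 0 t, HasDerivWithinAt f 0 (Set.Ici s) s := by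
    intro s hs
    have hs0 : 0 ≤ s := hs.1
    have hxK : w (t - s) ∈ K := hwK _
    have hxdom : w (t - s) ∈ dom := (hKdom _ hxK).1
    rw [hasDerivWithinAt_iff_tendsto_slope, Set.Ici_sdiff_left]
    have hu : Tendsto (fun σ : ℝ => (σ - s)⁻¹ • (w (t - σ) - w (t - s))) (𝓝[>] s)
        (𝓝 (-(A (w (t - s))))) := by
      have h1 : HasDerivAt (fun σ : ℝ => t - σ) (-1) s := by
        simpa using (hasDerivAt_id s).const_sub t
      have hD : HasDerivAt (fun σ : ℝ => w (t - σ)) ((-1 : ℝ) • A (w (t - s))) s :=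
        (hwderiv (t - s)).scomp s h1
      have hD' := (hD.hasDerivWithinAt (s := Set.Ici s))
      rw [hasDerivWithinAt_iff_tendsto_slope, Set.Ici_sdiff_left] at hD'
      have h2 := hD'
      have : (-1 : ℝ) • A (w (t - s)) = -(A (w (t - s))) := by
        rw [neg_one_smul]
      rw [this] at h2
      apply h2.congr
      intro σ
      simp [slope_def_module]
    have hTpart := horbit (w (t - s)) hxdom s hs0
    have hTu : Tendsto (fun σ => T σ ((σ - s)⁻¹ • (w (t - σ) - w (t - s)))) (𝓝[>] s)
        (𝓝 (T s (-(A (w (t - s)))))) := by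
      have key : Tendsto
          (fun σ => T σ ((σ - s)⁻¹ • (w (t - σ) - w (t - s))) - T s (-(A (w (t - s)))))
          (𝓝[>] s) (𝓝 0) := by
        refine squeeze_zero_norm'
          (a := fun σ => N * ‖(σ - s)⁻¹ • (w (t - σ) - w (t - s)) - (-(A (w (t - s))))‖
            + ‖T σ (-(A (w (t - s)))) - T s (-(A (w (t - s))))‖)
          ?_ ?_
        · filter_upwards [self_mem_nhdsWithin] with σ hσ
          have hσ0 : 0 ≤ σ := le_of_lt (lt_of_le_of_lt hs0 hσ)
          have hsplit : T σ ((σ - s)⁻¹ • (w (t - σ) - w (t - s))) - T s (-(A (w (t - s))))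
              = T σ ((σ - s)⁻¹ • (w (t - σ) - w (t - s)) - (-(A (w (t - s)))))
                + (T σ (-(A (w (t - s)))) - T s (-(A (w (t - s))))) := by
            rw [map_sub]; abel
          rw [hsplit]
          refine (norm_add_le _ _).trans ?_
          exact add_le_add_left (hNb σ hσ0 _) _
        · have h1 : Tendsto
              (fun σ => N * ‖(σ - s)⁻¹ • (w (t - σ) - w (t - s)) - (-(A (w (t - s))))‖)
              (𝓝[>] s) (𝓝 (N * ‖(0 : X)‖)) := by
            apply Tendsto.const_mul
            apply Tendsto.norm
            have := hu.sub (tendsto_const_nhds (x := -(A (w (t - s)))))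
            simpa using this
          have h2 : Tendsto (fun σ => ‖T σ (-(A (w (t - s)))) - T s (-(A (w (t - s))))‖)
              (𝓝[>] s) (𝓝 ‖(0 : X)‖) := by
            apply Tendsto.norm
            have hc : ContinuousWithinAt (fun σ => T σ (-(A (w (t - s))))) (Set.Ici 0) s :=
              hT.strong_cont _ s hs0
            have hc' : Tendsto (fun σ => T σ (-(A (w (t - s))))) (𝓝[>] s)
                (𝓝 (T s (-(A (w (t - s)))))) :=
              hc.mono_left (nhdsWithin_mono s (fun σ hσ => le_of_lt (lt_of_le_of_lt hs0 hσ)))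
            have := hc'.sub (tendsto_const_nhds (x := T s (-(A (w (t - s))))))
            simpa using this
          have := h1.add h2
          simpa using this
      have := key.add (tendsto_const_nhds (x := T s (-(A (w (t - s))))) (f := 𝓝[>] s))
      simpa using this
    have hsum := hTu.add hTpart
    have hzero : T s (-(A (w (t - s)))) + T s (A (w (t - s))) = 0 := by
      rw [map_neg]; simp
    rw [hzero] at hsum
    apply hsum.congr'
    filter_upwards [self_mem_nhdsWithin] with σ hσ
    have h1 : T σ ((σ - s)⁻¹ • (w (t - σ) - w (t - s)))
        = (σ - s)⁻¹ • (T σ (w (t - σ)) - T σ (w (t - s))) := by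
      rw [(T σ).map_smul_of_tower, map_sub]
    show T σ ((σ - s)⁻¹ • (w (t - σ) - w (t - s)))
        + (σ - s)⁻¹ • (T σ (w (t - s)) - T s (w (t - s))) = slope f s σ
    rw [h1, slope_def_module, ← smul_add]
    congr 1
    simp only [hfdef]
    abel
  have hconst := constant_of_has_deriv_right_zero hfcont hfderiv t (Set.right_mem_Icc.mpr ht)
  have hw0 : w 0 = v := by
    simp [w, vK, stmt6Exp_zero]
  have hft : f t = T t v := by
    simp [f, hw0]
  have hf0 : f 0 = w t := by
    simp [f, hT.map_zero]
  rw [← hft, hconst, hf0]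
  exact hwK t
end

section
/- Let q ≥ 1 and h_k^q = C(2q-1,k) C(k-1,k-q) (-1)^{k-q} for q ≤ k ≤ 2q-1. Then the function g(z) := (1 - Σ_{k=q}^{2q-1} h_k^q (1-z)^{-k}) / z^q extends to a function holomorphic on ℂ \ {1}; equivalently, the function z ↦ 1 - Σ_{k=q}^{2q-1} h_k^q (1-z)^{-k} has a zero of order at least q at z = 0. -/
open Finset Polynomial

/-- The coefficients `h_k^q = C(2q-1,k) C(k-1,k-q) (-1)^{k-q}`. -/
noncomputable def hCoef (q k : ℕ) : ℂ :=
  ((2 * q - 1).choose k : ℂ) * ((k - 1).choose (k - q) : ℂ) * (-1) ^ (k - q)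

private lemma alt_choose_sum (m : ℕ) (hm : m ≠ 0) :
    ∑ t ∈ range (m + 1), ((-1 : ℂ)) ^ t * (m.choose t : ℂ) = 0 := by
  have h := Int.alternating_sum_range_choose_of_ne hm
  have := congrArg (fun x : ℤ => (x : ℂ)) h
  push_cast at this
  simpa using this

private lemma altT (a m : ℕ) (hm : 1 ≤ m) :
    ∑ t ∈ range (m + 1),
      (-1 : ℂ) ^ t * ((m + a).choose t : ℂ) * ((a + (m - t)).choose (m - t) : ℂ) = 0 := by
  have key : ∀ t ∈ range (m + 1),
      (-1 : ℂ) ^ t * ((m + a).choose t : ℂ) * ((a + (m - t)).choose (m - t) : ℂ)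
        = ((m + a).choose m : ℂ) * ((-1 : ℂ) ^ t * (m.choose t : ℂ)) := by
    intro t ht
    rw [mem_range] at ht
    have htm : t ≤ m := by omega
    have h1 : (m + a).choose t * ((a + (m - t)).choose (m - t)) = (m + a).choose m * m.choose t := by
      have := Nat.choose_mul (n := m + a) (k := m) (s := t) htm
      have harg : m + a - t = a + (m - t) := by omega
      rw [harg] at this
      omega
    have h1' : ((m + a).choose t : ℂ) * ((a + (m - t)).choose (m - t) : ℂ)
        = ((m + a).choose m : ℂ) * (m.choose t : ℂ) := by exact_mod_cast congrArg (Nat.cast (R := ℂ)) h1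
    calc (-1 : ℂ) ^ t * ((m + a).choose t : ℂ) * ((a + (m - t)).choose (m - t) : ℂ)
        = (-1 : ℂ) ^ t * (((m + a).choose t : ℂ) * ((a + (m - t)).choose (m - t) : ℂ)) := by ring
      _ = ((m + a).choose m : ℂ) * ((-1 : ℂ) ^ t * (m.choose t : ℂ)) := by rw [h1']; ring
  rw [Finset.sum_congr rfl key, ← Finset.mul_sum, alt_choose_sum m (by omega), mul_zero]

private lemma altS (a m : ℕ) :
    ∑ t ∈ range (m + 1),
      (-1 : ℂ) ^ t * ((m + a + 1).choose t : ℂ) * ((a + (m - t)).choose (m - t) : ℂ)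
      = (-1 : ℂ) ^ m := by
  induction m with
  | zero => simp
  | succ m ih =>
    rw [Finset.sum_range_succ']
    have hT := altT a (m + 1) (by omega)
    rw [Finset.sum_range_succ'] at hT
    have pascal : ∀ i, (m + 1 + a + 1).choose (i + 1)
        = (m + 1 + a).choose i + (m + 1 + a).choose (i + 1) := by
      intro i
      have : m + 1 + a + 1 = (m + 1 + a) + 1 := by omega
      rw [this, Nat.choose_succ_succ]
    have split : ∀ i ∈ range (m + 1),
        (-1 : ℂ) ^ (i + 1) * ((m + 1 + a + 1).choose (i + 1) : ℂ)
            * ((a + (m + 1 - (i + 1))).choose (m + 1 - (i + 1)) : ℂ)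
        = (-1 : ℂ) ^ (i + 1) * ((m + 1 + a).choose (i + 1) : ℂ)
            * ((a + (m + 1 - (i + 1))).choose (m + 1 - (i + 1)) : ℂ)
          + (-(1 : ℂ)) * ((-1 : ℂ) ^ i * ((m + a + 1).choose i : ℂ)
            * ((a + (m - i)).choose (m - i) : ℂ)) := by
      intro i hi
      rw [mem_range] at hi
      have h2 : m + 1 - (i + 1) = m - i := by omega
      have h3 : m + 1 + a = m + a + 1 := by omega
      rw [pascal i, h2, h3]
      push_cast
      ring
    rw [Finset.sum_congr rfl split, Finset.sum_add_distrib, ← Finset.mul_sum, ih]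
    have h3 : m + 1 + a = m + a + 1 := by omega
    have hTeq : ∑ i ∈ range (m + 1),
        (-1 : ℂ) ^ (i + 1) * ((m + 1 + a).choose (i + 1) : ℂ)
          * ((a + (m + 1 - (i + 1))).choose (m + 1 - (i + 1)) : ℂ)
        + (-1 : ℂ) ^ 0 * ((m + 1 + a + 1).choose 0 : ℂ)
          * ((a + (m + 1 - 0)).choose (m + 1 - 0) : ℂ) = 0 := by
      have : ((m + 1 + a + 1).choose 0 : ℂ) = ((m + 1 + a).choose 0 : ℂ) := by simp
      rw [this]
      exact hT
    have := hTeq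
    ring_nf at this ⊢
    linear_combination this

private lemma keyId (q j : ℕ) (hq : 1 ≤ q) (hj : j < q) :
    ∑ k ∈ Icc q (2 * q - 1), hCoef q k * ((2 * q - 1 - k).choose j : ℂ)
      = ((2 * q - 1).choose j : ℂ) := by
  have hIcc : Icc q (2 * q - 1) = Ico q (2 * q) := by
    rw [← Finset.Ico_add_one_right_eq_Icc]; congr 1; omega
  rw [hIcc, Finset.sum_Ico_eq_sum_range]
  have hr : 2 * q - q = q := by omega
  rw [hr]
  set m := q - 1 - j with hm
  set a := q - 1 with ha
  set f : ℕ → ℂ := fun s =>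
    (-1 : ℂ) ^ s * ((m + a + 1).choose s : ℂ) * ((a + (m - s)).choose (m - s) : ℂ) with hf
  have hsub : range (m + 1) ⊆ range q := by
    intro x hx; rw [mem_range] at *; omega
  rw [← Finset.sum_subset hsub (by
    intro t ht htm
    rw [mem_range] at ht htm
    have hz : (2 * q - 1 - (q + t)).choose j = 0 := Nat.choose_eq_zero_of_lt (by omega)
    rw [hz]
    simp)]
  have key : ∀ t ∈ range (m + 1),
      hCoef q (q + t) * ((2 * q - 1 - (q + t)).choose j : ℂ)
      = ((2 * q - 1).choose j : ℂ) * (-1 : ℂ) ^ m * f (m - t) := by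
    intro t ht
    rw [mem_range] at ht
    have htm : t ≤ m := by omega
    unfold hCoef
    rw [hf]
    simp only []
    have e1 : q + t - q = t := by omega
    have e2 : (2 * q - 1).choose (q + t) = (2 * q - 1).choose (q - 1 - t) := by
      rw [← Nat.choose_symm (by omega : q + t ≤ 2 * q - 1)]; congr 1; omega
    have e3 : 2 * q - 1 - (q + t) = q - 1 - t := by omega
    rw [e1, e2, e3]
    have tri := Nat.choose_mul (n := 2 * q - 1) (k := q - 1 - t) (s := j) (by omega)
    have e4 : (2 * q - 1 - j).choose (q - 1 - t - j) = (m + a + 1).choose (m - t) := by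
      congr 1 <;> omega
    rw [e4] at tri
    have tricE : ((2 * q - 1).choose (q - 1 - t) : ℂ) * ((q - 1 - t).choose j : ℂ)
        = ((2 * q - 1).choose j : ℂ) * ((m + a + 1).choose (m - t) : ℂ) := by
      exact_mod_cast congrArg (Nat.cast (R := ℂ)) tri
    have eF : (a + (m - (m - t))).choose (m - (m - t)) = (q + t - 1).choose t := by
      congr 1 <;> omega
    rw [eF]
    have sgn : (-1 : ℂ) ^ t = (-1 : ℂ) ^ m * (-1 : ℂ) ^ (m - t) := by
      have h2 : m = (m - t) + t := by omega
      calc (-1 : ℂ) ^ t = ((-1 : ℂ) ^ (m - t) * (-1 : ℂ) ^ (m - t)) * (-1 : ℂ) ^ t := by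
            rw [← pow_add]
            have : m - t + (m - t) = 2 * (m - t) := by omega
            rw [this, pow_mul, neg_one_sq, one_pow, one_mul]
        _ = (-1 : ℂ) ^ ((m - t) + t) * (-1 : ℂ) ^ (m - t) := by rw [pow_add]; ring
        _ = (-1 : ℂ) ^ m * (-1 : ℂ) ^ (m - t) := by rw [← h2]
    linear_combination ((-1 : ℂ) ^ t * ((q + t - 1).choose t : ℂ)) * tricE
      + (((2 * q - 1).choose j : ℂ) * ((m + a + 1).choose (m - t) : ℂ)
          * ((q + t - 1).choose t : ℂ)) * sgn
  rw [Finset.sum_congr rfl key, ← Finset.mul_sum]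
  have hrefl : ∑ t ∈ range (m + 1), f (m - t) = ∑ t ∈ range (m + 1), f t := by
    have := Finset.sum_range_reflect f (m + 1)
    simpa using this
  rw [hrefl, hf]
  rw [altS a m]
  have : (-1 : ℂ) ^ m * (-1 : ℂ) ^ m = 1 := by
    rw [← pow_add]
    have : m + m = 2 * m := by omega
    rw [this, pow_mul, neg_one_sq, one_pow]
  calc ((2 * q - 1).choose j : ℂ) * (-1 : ℂ) ^ m * (-1 : ℂ) ^ m
      = ((2 * q - 1).choose j : ℂ) * ((-1 : ℂ) ^ m * (-1 : ℂ) ^ m) := by ring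
    _ = ((2 * q - 1).choose j : ℂ) := by rw [this, mul_one]

private lemma coeff_one_sub_X_pow (n d : ℕ) :
    ((1 - X : Polynomial ℂ) ^ n).coeff d = (-1 : ℂ) ^ d * (n.choose d : ℂ) := by
  have h1 : (1 - X : Polynomial ℂ) = -1 * (X + C (-1)) := by
    simp [Polynomial.C_neg]; ring
  rw [h1, mul_pow, ← C_1, ← C_neg, ← C_pow, coeff_C_mul, coeff_X_add_C_pow]
  by_cases hd : d ≤ n
  · have : (-1 : ℂ) ^ n * ((-1 : ℂ) ^ (n - d) * (n.choose d : ℂ))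
        = ((-1 : ℂ) ^ (n + (n - d))) * (n.choose d : ℂ) := by rw [pow_add]; ring
    rw [this]
    congr 1
    have h2 : n + (n - d) = 2 * (n - d) + d := by omega
    rw [h2, pow_add, pow_mul, neg_one_sq, one_pow, one_mul]
  · have : n.choose d = 0 := Nat.choose_eq_zero_of_lt (by omega)
    simp [this]

/-- The function `g(z) = (1 - Σ_{k=q}^{2q-1} h_k^q (1-z)^{-k}) / z^q` extends to a
holomorphic function on `ℂ \ {1}`; i.e. `1 - Σ h_k^q (1-z)^{-k}` has a zero of order ≥ q at 0. -/
theorem stmt_8 (q : ℕ) (hq : 1 ≤ q) :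
    ∃ g : ℂ → ℂ, DifferentiableOn ℂ g {z : ℂ | z ≠ 1} ∧
      ∀ z : ℂ, z ≠ 1 → z ≠ 0 →
        g z = (1 - ∑ k ∈ Finset.Icc q (2 * q - 1), hCoef q k * ((1 - z)⁻¹) ^ k) / z ^ q := by
  set P : Polynomial ℂ := (1 - X) ^ (2 * q - 1)
    - ∑ k ∈ Icc q (2 * q - 1), C (hCoef q k) * (1 - X) ^ (2 * q - 1 - k) with hP
  have hdvd : X ^ q ∣ P := by
    rw [Polynomial.X_pow_dvd_iff]
    intro d hd
    rw [hP, coeff_sub, finset_sum_coeff]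
    simp only [coeff_C_mul, coeff_one_sub_X_pow]
    have := keyId q d hq hd
    calc (-1 : ℂ) ^ d * ((2 * q - 1).choose d : ℂ)
        - ∑ k ∈ Icc q (2 * q - 1), hCoef q k * ((-1 : ℂ) ^ d * ((2 * q - 1 - k).choose d : ℂ))
        = (-1 : ℂ) ^ d * (((2 * q - 1).choose d : ℂ)
            - ∑ k ∈ Icc q (2 * q - 1), hCoef q k * ((2 * q - 1 - k).choose d : ℂ)) := by
          rw [mul_sub, Finset.mul_sum]
          congr 1
          exact Finset.sum_congr rfl fun k _ => by ring
      _ = 0 := by rw [this]; ring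
  obtain ⟨Q, hQ⟩ := hdvd
  refine ⟨fun z => Q.eval z / (1 - z) ^ (2 * q - 1), ?_, ?_⟩
  · apply DifferentiableOn.div
    · exact Q.differentiable.differentiableOn
    · exact (Differentiable.pow ((differentiable_const (1 : ℂ)).sub differentiable_id) _).differentiableOn
    · intro z hz
      exact pow_ne_zero _ (sub_ne_zero.mpr (Ne.symm hz))
  · intro z hz1 hz0
    have h1z : (1 : ℂ) - z ≠ 0 := sub_ne_zero.mpr (Ne.symm hz1)
    rw [div_eq_div_iff (pow_ne_zero _ h1z) (pow_ne_zero _ hz0)]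
    have hev : P.eval z = z ^ q * Q.eval z := by
      rw [hQ]; simp [mul_comm]
    have hev2 : P.eval z = (1 - z) ^ (2 * q - 1)
        - ∑ k ∈ Icc q (2 * q - 1), hCoef q k * (1 - z) ^ (2 * q - 1 - k) := by
      simp [hP, Polynomial.eval_finset_sum]
    have key : (1 - z) ^ (2 * q - 1)
        - ∑ k ∈ Icc q (2 * q - 1), hCoef q k * (1 - z) ^ (2 * q - 1 - k)
        = (1 - ∑ k ∈ Icc q (2 * q - 1), hCoef q k * ((1 - z)⁻¹) ^ k) * (1 - z) ^ (2 * q - 1) := by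
      rw [sub_mul, one_mul, Finset.sum_mul]
      congr 1
      refine Finset.sum_congr rfl fun k hk => ?_
      rw [Finset.mem_Icc] at hk
      have hk2 : k ≤ 2 * q - 1 := hk.2
      rw [pow_sub₀ _ h1z hk2, inv_pow]
      ring
    calc Q.eval z * z ^ q = P.eval z := by rw [hev]; ring
      _ = (1 - ∑ k ∈ Icc q (2 * q - 1), hCoef q k * ((1 - z)⁻¹) ^ k) * (1 - z) ^ (2 * q - 1) := by
          rw [hev2, key]
end

section
/- Let B generate a C_0-semigroup on a Banach space X with ‖e^{tB}‖ ≤ N for all t ≥ 0, and let q ≥ 1 with coefficients h_k^q = C(2q-1,k)C(k-1,k-q)(-1)^{k-q}. Then there exists a constant C(q,N), depending only on q and N, such that for all v ∈ 𝒟(B^q): ‖v - Σ_{k=q}^{2q-1} h_k^q (1-B)^{-k} v‖ ≤ C(q,N) ‖B^q v‖. -/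
open Filter Topology MeasureTheory

open Polynomial Finset Set fwdDiff

section Combinatorics

lemma my_fwdDiff_eval (p : ℂ[X]) :
    Δ_[(1:ℂ)] (fun x => p.eval x) = fun x => (Polynomial.taylor 1 p - p).eval x := by
  funext x
  simp [fwdDiff, Polynomial.taylor_eval]

lemma my_fwdDiff_iter_zero (n : ℕ) : ∀ p : ℂ[X], p.degree < n →
    (fwdDiff (1:ℂ))^[n] (fun x => p.eval x) = 0 := by
  induction n with
  | zero =>
    intro p hp
    have : p = 0 := by
      rw [← Polynomial.degree_eq_bot]
      exact Nat.WithBot.lt_zero_iff.mp (by exact_mod_cast hp)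
    simp [this]
    rfl
  | succ n ih =>
    intro p hp
    rw [Function.iterate_succ_apply, my_fwdDiff_eval]
    apply ih
    by_cases hp0 : p = 0
    · simp [hp0]
    · have hd : (Polynomial.taylor 1 p).degree = p.degree := by
        rw [Polynomial.degree_eq_natDegree hp0, Polynomial.degree_eq_natDegree
          (fun h => hp0 (Polynomial.taylor_injective 1 (by simp [h]))),
          Polynomial.natDegree_taylor]
      have hlc : (Polynomial.taylor 1 p).leadingCoeff = p.leadingCoeff := by
        have hx : (Polynomial.X + 1 : ℂ[X]) = Polynomial.X + Polynomial.C 1 := by simp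
        rw [Polynomial.taylor_apply,
          Polynomial.leadingCoeff_comp (by rw [Polynomial.natDegree_X_add_C]; exact one_ne_zero)]
        rw [Polynomial.leadingCoeff_X_add_C]
        simp
      have h1 := Polynomial.degree_sub_lt hd (fun h => hp0 (Polynomial.taylor_injective 1 (by simp [h]))) hlc
      rw [hd] at h1
      have h2 : p.degree ≤ (n : WithBot ℕ) := by
        rcases Polynomial.degree_eq_natDegree hp0 ▸ hp with h
        rw [Polynomial.degree_eq_natDegree hp0]
        exact_mod_cast Nat.lt_succ_iff.mp (by exact_mod_cast h)
      exact lt_of_lt_of_le h1 h2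

lemma fd (n : ℕ) (p : ℂ[X]) (hp : p.degree < n) :
    ∑ k ∈ range (n+1), (-1:ℂ)^k * (n.choose k) * p.eval (k:ℂ) = 0 := by
  have h0 := fwdDiff_iter_eq_sum_shift (1:ℂ) (fun x => p.eval x) n 0
  rw [my_fwdDiff_iter_zero n p hp] at h0
  have : ∑ k ∈ range (n+1), (-1:ℂ)^k * (n.choose k) * p.eval (k:ℂ)
      = (-1:ℂ)^n * ∑ k ∈ range (n+1), ((-1:ℤ)^(n-k) * (n.choose k) : ℤ) • p.eval ((0:ℂ) + k • 1) := by
    rw [Finset.mul_sum]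
    apply Finset.sum_congr rfl
    intro k hk
    have hkn : k ≤ n := Nat.lt_succ_iff.mp (Finset.mem_range.mp hk)
    have hsign : (-1:ℂ)^k = (-1)^n * (-1)^(n-k) := by
      rw [← pow_add]
      rw [show n + (n - k) = k + 2*(n-k) by omega, pow_add, pow_mul, neg_one_sq, one_pow, mul_one]
    push_cast
    rw [hsign]
    ring_nf
    simp [mul_comm, mul_assoc, mul_left_comm]
  rw [this, ← h0]
  simp

lemma descPochhammer_eval_neg_one (n : ℕ) :
    (descPochhammer ℂ n).eval (-1) = (-1)^n * n.factorial := by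
  induction n with
  | zero => simp
  | succ n ih =>
    rw [descPochhammer_succ_eval, ih, Nat.factorial_succ]
    push_cast
    ring

lemma key_sum (q : ℕ) (hq : 1 ≤ q) (m : ℕ) (hm : m < q) :
    ∑ k ∈ Icc q (2*q-1), hCoef q k * (k.choose m : ℂ) = if m = 0 then 1 else 0 := by
  have hcne1 : (((q-1).factorial : ℕ) : ℂ) ≠ 0 := Nat.cast_ne_zero.mpr (Nat.factorial_pos _).ne'
  have hcne2 : ((m.factorial : ℕ) : ℂ) ≠ 0 := Nat.cast_ne_zero.mpr (Nat.factorial_pos _).ne'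
  set c : ℂ := (((q-1).factorial : ℂ) * (m.factorial : ℂ))⁻¹ with hc
  set p : ℂ[X] := C c * ((descPochhammer ℂ (q-1)).comp (X - C 1)) * descPochhammer ℂ m with hp
  set g : ℕ → ℂ := fun k => (-1:ℂ)^k * ((2*q-1).choose k : ℂ) * p.eval (k:ℂ) with hg
  have hpeval : ∀ x : ℂ,
      p.eval x = c * (descPochhammer ℂ (q-1)).eval (x - 1) * (descPochhammer ℂ m).eval x := by
    intro x
    simp [hp, eval_comp]
  have hdeg : p.degree < ((2*q-1 : ℕ) : WithBot ℕ) := by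
    have h1 : p.natDegree ≤ (q-1) + m := by
      calc p.natDegree ≤ (C c * ((descPochhammer ℂ (q-1)).comp (X - C 1))).natDegree
            + (descPochhammer ℂ m).natDegree := natDegree_mul_le
        _ ≤ ((C c).natDegree + ((descPochhammer ℂ (q-1)).comp (X - C 1)).natDegree)
            + (descPochhammer ℂ m).natDegree := by
              exact Nat.add_le_add_right natDegree_mul_le _
        _ ≤ (q-1) + m := by
          rw [natDegree_C, natDegree_comp, natDegree_X_sub_C, descPochhammer_natDegree,
            descPochhammer_natDegree]
          omega
    calc p.degree ≤ (p.natDegree : WithBot ℕ) := degree_le_natDegree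
      _ < ((2*q-1 : ℕ) : WithBot ℕ) := by
        have : p.natDegree < 2*q-1 := by omega
        exact_mod_cast this
  have hfd := fd (2*q-1) p hdeg
  rw [show 2*q-1+1 = 2*q by omega] at hfd
  have hsplit := Finset.sum_range_add_sum_Ico g (show q ≤ 2*q by omega)
  have h0sum : ∑ k ∈ range q, g k = g 0 := by
    apply Finset.sum_eq_single_of_mem 0 (mem_range.mpr (by omega))
    intro b _hb hb0
    have hb1 : 1 ≤ b := Nat.one_le_iff_ne_zero.mpr hb0
    have hblt : b < q := mem_range.mp _hb
    have : (descPochhammer ℂ (q-1)).eval ((b:ℂ) - 1) = 0 := by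
      have : ((b:ℂ) - 1) = ((b-1 : ℕ) : ℂ) := by push_cast [hb1]; ring
      rw [this, descPochhammer_eval_eq_descFactorial]
      have : (b-1).descFactorial (q-1) = 0 := Nat.descFactorial_eq_zero_iff_lt.mpr (by omega)
      rw [this, Nat.cast_zero]
    simp [hg, hpeval, this]
  have hg0 : g 0 = (-1)^(q-1) * ((q-1).factorial : ℂ) * c * (if m = 0 then 1 else 0) := by
    simp only [hg, hpeval]
    rw [show ((0:ℕ):ℂ) - 1 = -1 by norm_num, descPochhammer_eval_neg_one,
      show ((0:ℕ):ℂ) = (0:ℂ) by norm_num, descPochhammer_eval_zero]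
    by_cases hm0 : m = 0 <;> simp [hm0] <;> ring
  have hIcc : Finset.Ico q (2*q) = Finset.Icc q (2*q-1) := by
    rw [← Finset.Ico_add_one_right_eq_Icc]
    congr 1
    omega
  have hterm : ∀ k ∈ Finset.Icc q (2*q-1), hCoef q k * (k.choose m : ℂ) = (-1)^q * g k := by
    intro k hk
    obtain ⟨hk1, hk2⟩ := Finset.mem_Icc.mp hk
    have hkpos : 1 ≤ k := le_trans hq hk1
    have heval : p.eval (k:ℂ) = c * ((q-1).factorial : ℂ) * ((k-1).choose (q-1) : ℂ)
        * (m.factorial : ℂ) * (k.choose m : ℂ) := by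
      rw [hpeval]
      have h1 : ((k:ℂ) - 1) = ((k-1 : ℕ) : ℂ) := by push_cast [hkpos]; ring
      rw [h1, descPochhammer_eval_eq_descFactorial, descPochhammer_eval_eq_descFactorial,
        Nat.descFactorial_eq_factorial_mul_choose, Nat.descFactorial_eq_factorial_mul_choose]
      push_cast
      ring
    have hchoose : (k-1).choose (k-q) = (k-1).choose (q-1) := by
      have := Nat.choose_symm (show q-1 ≤ k-1 by omega)
      rw [show k-1-(q-1) = k-q by omega] at this
      exact this
    have hsign : ((-1:ℂ)) ^ (k-q) = (-1)^k * (-1)^q := by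
      have h2 : ((-1:ℂ))^(k-q) * (-1)^q = (-1)^k := by
        rw [← pow_add, show k-q+q = k by omega]
      calc ((-1:ℂ))^(k-q) = ((-1:ℂ))^(k-q) * ((-1)^q * (-1)^q) := by
            rw [← pow_add]
            simp [← two_mul, pow_mul]
        _ = (-1)^k * (-1)^q := by rw [← mul_assoc, h2]
    have hfact : c * ((q-1).factorial : ℂ) * (m.factorial : ℂ) = 1 := by
      rw [hc, mul_assoc, inv_mul_cancel₀ (mul_ne_zero hcne1 hcne2)]
    unfold hCoef
    simp only [hg]
    rw [heval, hchoose, hsign]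
    linear_combination (-((-1:ℂ)^k) * (-1)^q * ((2*q-1).choose k : ℂ) * (((k-1).choose (q-1)) : ℂ)
      * ((k.choose m) : ℂ)) * hfact
  -- assemble
  rw [Finset.sum_congr rfl hterm, ← Finset.mul_sum, ← hIcc]
  have hIco : ∑ k ∈ Finset.Ico q (2*q), g k = - g 0 := by
    have h2 : g 0 + ∑ k ∈ Finset.Ico q (2*q), g k = 0 := by
      rw [← h0sum, hsplit]
      exact hfd
    exact eq_neg_of_add_eq_zero_right h2
  rw [hIco, hg0]
  have hsgn2 : ((-1:ℂ))^q * (-1)^(q-1) = -1 := by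
    rw [← pow_add, show q+(q-1) = 2*(q-1)+1 by omega, pow_succ, pow_mul]
    simp
  have hfc : (((q-1).factorial : ℂ)) * c * (if m = 0 then 1 else 0) = (if m = 0 then (1:ℂ) else 0) := by
    by_cases hm0 : m = 0
    · simp only [hm0, if_true, mul_one]
      rw [hc, hm0]
      simp only [Nat.factorial_zero, Nat.cast_one, mul_one]
      field_simp
    · simp [hm0]
  linear_combination (-((((q-1).factorial : ℂ)) * c * (if m = 0 then (1:ℂ) else 0))) * hsgn2 + hfc

noncomputable def Pq (q : ℕ) : ℂ[X] := 1 - ∑ k ∈ Finset.Icc q (2*q-1), C (hCoef q k) * X^k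

lemma hasse_eval_zero (q : ℕ) (hq : 1 ≤ q) (m : ℕ) (hm : m < q) :
    ((Polynomial.hasseDeriv m (Pq q)).eval 1) = 0 := by
  unfold Pq
  rw [map_sub, map_sum, eval_sub, eval_finset_sum]
  have h1 : ∀ k, (Polynomial.hasseDeriv m (C (hCoef q k) * X^k)).eval 1
      = hCoef q k * (k.choose m : ℂ) := by
    intro k
    rw [C_mul_X_pow_eq_monomial, hasseDeriv_monomial, eval_monomial, one_pow, mul_one, mul_comm]
  have h2 : (Polynomial.hasseDeriv m (1 : ℂ[X])).eval 1 = if m = 0 then 1 else 0 := by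
    rcases Nat.eq_zero_or_pos m with hm0 | hm0
    · simp [hm0]
    · rw [Polynomial.hasseDeriv_apply_one m hm0]
      simp [Nat.pos_iff_ne_zero.mp hm0]
  simp only [h1]
  rw [h2, key_sum q hq m hm, sub_self]

lemma dvd_P (q : ℕ) (hq : 1 ≤ q) : ∃ Qp : ℂ[X], Pq q = (X - C 1)^q * Qp := by
  suffices h : (X - C 1)^q ∣ Pq q by
    obtain ⟨Qp, hQp⟩ := h
    exact ⟨Qp, hQp⟩
  have hs := Polynomial.sum_taylor_eq (Pq q) 1
  rw [← hs, Polynomial.sum_def]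
  apply Finset.dvd_sum
  intro i hi
  rcases le_or_gt q i with h | h
  · exact Dvd.dvd.mul_left (pow_dvd_pow _ h) _
  · exfalso
    apply Polynomial.mem_support_iff.mp hi
    rw [Polynomial.taylor_coeff]
    exact hasse_eval_zero q hq i h

end Combinatorics

section Operators

variable {X : Type*} [NormedAddCommGroup X] [NormedSpace ℂ X]
  {T : ℝ → X →L[ℂ] X} {N : ℝ} {B : X →ₗ[ℂ] X} {dom : Set X} {R : X →L[ℂ] X}

lemma orbit_deriv (hT : IsC0Semigroup T N) (hG : IsGeneratorOf B dom T) {y : X} (hy : y ∈ dom)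
    {s : ℝ} (hs : 0 ≤ s) : HasDerivWithinAt (fun t => T t y) (T s (B y)) (Set.Ici s) s := by
  rw [← hasDerivWithinAt_Ioi_iff_Ici, hasDerivWithinAt_iff_tendsto_slope,
    Set.diff_singleton_eq_self (notMem_Ioi.mpr le_rfl)]
  have h2 : Tendsto (fun t : ℝ => t - s) (𝓝[>] s) (𝓝[>] 0) := by
    rw [tendsto_nhdsWithin_iff]
    constructor
    · have h0 : Tendsto (fun t : ℝ => t - s) (𝓝 s) (𝓝 (s - s)) :=
        (continuous_id.sub continuous_const).tendsto s
      simpa using h0.mono_left nhdsWithin_le_nhds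
    · filter_upwards [self_mem_nhdsWithin] with t ht
      simpa using sub_pos.mpr (Set.mem_Ioi.mp ht)
  have h4 : Tendsto (fun t : ℝ => (T s) (((t - s : ℝ) : ℂ)⁻¹ • (T (t - s) y - y)))
      (𝓝[>] s) (𝓝 (T s (B y))) :=
    ((T s).continuous.tendsto _).comp ((hG.deriv_mem y hy).comp h2)
  apply h4.congr'
  filter_upwards [self_mem_nhdsWithin] with t ht
  have hts : (0:ℝ) < t - s := sub_pos.mpr ht
  have h5 : T t y = T s (T (t - s) y) := by
    have := hT.map_add s (t - s) hs hts.le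
    rw [show s + (t - s) = t by ring] at this
    rw [this]
    rfl
  rw [_root_.map_smul, ← Complex.ofReal_inv, Complex.coe_smul, slope_def_module, h5, map_sub]

lemma resolvent_bound (hT : IsC0Semigroup T N) (hG : IsGeneratorOf B dom T)
    (hRes : IsResolventOf R 1 B dom) (x : X) :
    ‖R x‖ ≤ (2*N*Real.log (2*N+2)) * ‖x‖ := by
  have hN0 : 0 ≤ N := le_trans (norm_nonneg _) (hT.norm_bound 0 le_rfl)
  set s₀ := Real.log (2*N+2) with hs₀def
  have hs₀ : 0 ≤ s₀ := Real.log_nonneg (by linarith)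
  have hRx : R x ∈ dom := (hRes.1 x).1
  have hBRx : B (R x) = R x - x := by
    have h := (hRes.1 x).2
    rw [one_smul] at h
    exact eq_sub_of_add_eq (by rw [add_comm]; exact (sub_eq_iff_eq_add.mp h).symm)
  set ψ : ℝ → X := fun s => Real.exp (-s) • T s (R x) with hψdef
  have hψd : ∀ s ∈ Set.Ico 0 s₀, HasDerivWithinAt ψ (-(Real.exp (-s) • T s x)) (Set.Ici s) s := by
    intro s hs
    have h1 : HasDerivWithinAt (fun u : ℝ => Real.exp (-u)) (-Real.exp (-s)) (Set.Ici s) s := by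
      have := (Real.hasDerivAt_exp (-s)).comp s (hasDerivAt_neg s)
      simpa [Function.comp_def] using this.hasDerivWithinAt
    have h2 := orbit_deriv hT hG hRx hs.1
    have h3 := h1.smul h2
    convert h3 using 1
    · rfl
    rw [hBRx, map_sub]
    simp only [smul_sub, neg_smul]
    abel
  have hψc : ContinuousOn ψ (Set.Icc 0 s₀) := by
    apply ContinuousOn.smul (f := fun s : ℝ => Real.exp (-s))
    · exact (Real.continuous_exp.comp continuous_neg).continuousOn
    · exact (hT.strong_cont (R x)).mono (fun u hu => hu.1)
  have hbound : ∀ s ∈ Set.Ico 0 s₀, ‖-(Real.exp (-s) • T s x)‖ ≤ N * ‖x‖ := by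
    intro s hs
    rw [norm_neg, norm_smul, Real.norm_eq_abs, abs_of_pos (Real.exp_pos _)]
    have he : Real.exp (-s) ≤ 1 := Real.exp_le_one_iff.mpr (by linarith [hs.1])
    have hT1 : ‖T s x‖ ≤ N * ‖x‖ :=
      le_trans ((T s).le_opNorm x) (mul_le_mul_of_nonneg_right (hT.norm_bound s hs.1) (norm_nonneg x))
    calc Real.exp (-s) * ‖T s x‖ ≤ 1 * (N * ‖x‖) := by
          apply mul_le_mul he hT1 (norm_nonneg _) (by norm_num)
      _ = N * ‖x‖ := one_mul _
  have key := norm_image_sub_le_of_norm_deriv_right_le_segment hψc hψd hbound s₀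
    (Set.mem_Icc.mpr ⟨hs₀, le_rfl⟩)
  have hψ0 : ψ 0 = R x := by
    simp [hψdef, hT.map_zero]
  have hexp : Real.exp (-s₀) = (2*N+2)⁻¹ := by
    rw [Real.exp_neg, hs₀def, Real.exp_log (by linarith)]
  have hψs : ‖ψ s₀‖ ≤ (2*N+2)⁻¹ * (N * ‖R x‖) := by
    rw [hψdef]
    simp only
    rw [norm_smul, Real.norm_eq_abs, abs_of_pos (Real.exp_pos _), hexp]
    apply mul_le_mul_of_nonneg_left _ (by positivity)
    exact le_trans ((T s₀).le_opNorm _)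
      (mul_le_mul_of_nonneg_right (hT.norm_bound s₀ hs₀) (norm_nonneg _))
  have htri : ‖R x‖ ≤ ‖ψ s₀ - ψ 0‖ + ‖ψ s₀‖ := by
    rw [← hψ0]
    calc ‖ψ 0‖ = ‖ψ s₀ - (ψ s₀ - ψ 0)‖ := by congr 1; abel
      _ ≤ ‖ψ s₀‖ + ‖ψ s₀ - ψ 0‖ := norm_sub_le _ _
      _ = ‖ψ s₀ - ψ 0‖ + ‖ψ s₀‖ := by ring
  have hhalf : (2*N+2)⁻¹ * (N * ‖R x‖) ≤ (1/2) * ‖R x‖ := by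
    have hpos : (0:ℝ) < 2*N+2 := by linarith
    rw [inv_mul_le_iff₀ hpos]
    nlinarith [norm_nonneg (R x)]
  have hcomb : ‖R x‖ ≤ N * ‖x‖ * (s₀ - 0) + (2*N+2)⁻¹ * (N * ‖R x‖) :=
    le_trans htri (add_le_add key hψs)
  nlinarith [norm_nonneg (R x), norm_nonneg x]

lemma clm_pow_apply (R : X →L[ℂ] X) (k : ℕ) (x : X) :
    ((R : X →ₗ[ℂ] X)^k) x = (R^k) x := by
  induction k generalizing x with
  | zero => rfl
  | succ k ih =>
    rw [pow_succ, pow_succ, Module.End.mul_apply, ContinuousLinearMap.mul_apply]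
    exact ih (R x)

lemma resolvent_pow_identity (hRes : IsResolventOf R 1 B dom) :
    ∀ (i : ℕ) (v : X), (∀ j < i, (B^j) v ∈ dom) →
      (((R : X →ₗ[ℂ] X) - 1)^i) v = ((R : X →ₗ[ℂ] X)^i) ((B^i) v) := by
  intro i
  induction i with
  | zero =>
    intro v _
    simp
  | succ i ih =>
    intro v hv
    have hv0 : v ∈ dom := by simpa using hv 0 (Nat.succ_pos i)
    have hRBv : R (B v) = R v - v := by
      have h := hRes.2 v hv0
      rw [one_smul, map_sub] at h
      exact eq_sub_of_add_eq (by rw [add_comm]; exact (sub_eq_iff_eq_add.mp h).symm)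
    set R' : X →ₗ[ℂ] X := (R : X →ₗ[ℂ] X) with hR'
    have hcomm : Commute ((R' - 1)^i) R' :=
      (((Commute.refl R').sub_left (Commute.one_left R')).pow_left i)
    have hDv : (R' - 1) v = R' (B v) := by
      rw [LinearMap.sub_apply, Module.End.one_apply]
      show R v - v = R (B v)
      rw [hRBv]
    calc ((R' - 1)^(i+1)) v = ((R' - 1)^i) ((R' - 1) v) := by
          rw [pow_succ, Module.End.mul_apply]
      _ = ((R' - 1)^i) (R' (B v)) := by rw [hDv]
      _ = R' (((R' - 1)^i) (B v)) := by
          have h := LinearMap.congr_fun hcomm.eq (B v)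
          simpa [Module.End.mul_apply] using h
      _ = R' ((R'^i) ((B^i) (B v))) := by
          rw [ih (B v) (fun j hj => by
            have := hv (j+1) (by omega)
            rwa [pow_succ, Module.End.mul_apply] at this)]
      _ = ((R'^(i+1))) ((B^(i+1)) v) := by
          rw [pow_succ B i, Module.End.mul_apply, pow_succ' R' i, Module.End.mul_apply]

end Operators

/-- There is a constant `C(q,N)` depending only on `q` and `N` such that for every
generator `B` of a `C₀`-semigroup with bound `N` and all `v ∈ 𝒟(B^q)`:
`‖v - Σ_{k=q}^{2q-1} h_k^q (1-B)^{-k} v‖ ≤ C(q,N) ‖B^q v‖`. -/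
theorem stmt_9 (q : ℕ) (hq : 1 ≤ q) (N : ℝ) :
    ∃ C : ℝ, ∀ (X : Type) [NormedAddCommGroup X] [NormedSpace ℂ X] [CompleteSpace X],
      ∀ (T : ℝ → X →L[ℂ] X) (B : X →ₗ[ℂ] X) (dom : Set X) (R : X →L[ℂ] X),
        IsC0Semigroup T N → IsGeneratorOf B dom T → IsResolventOf R 1 B dom →
        ∀ v : X, (∀ i < q, (B ^ i) v ∈ dom) →
          ‖v - ∑ k ∈ Finset.Icc q (2 * q - 1), hCoef q k • (R ^ k) v‖ ≤ C * ‖(B ^ q) v‖ := by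
  obtain ⟨Qp, hQp⟩ := dvd_P q hq
  set M : ℝ := max (2*N*Real.log (2*N+2)) 0 with hMdef
  refine ⟨∑ j ∈ Finset.range (Qp.natDegree+1), ‖Qp.coeff j‖ * M^(j+q), ?_⟩
  intro X _ _ _ T B dom R hT hG hRes v hv
  have hM0 : 0 ≤ M := le_max_right _ _
  have hRb : ∀ x : X, ‖R x‖ ≤ M * ‖x‖ := fun x =>
    le_trans (resolvent_bound hT hG hRes x)
      (mul_le_mul_of_nonneg_right (le_max_left _ _) (norm_nonneg x))
  have hRpow : ∀ (k : ℕ) (x : X), ‖(((R : X →ₗ[ℂ] X))^k) x‖ ≤ M^k * ‖x‖ := by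
    intro k
    induction k with
    | zero => intro x; simp
    | succ k ih =>
      intro x
      rw [pow_succ, Module.End.mul_apply]
      calc ‖((R : X →ₗ[ℂ] X)^k) ((R : X →ₗ[ℂ] X) x)‖ ≤ M^k * ‖(R : X →ₗ[ℂ] X) x‖ := ih _
        _ ≤ M^k * (M * ‖x‖) := by
            apply mul_le_mul_of_nonneg_left _ (pow_nonneg hM0 k)
            exact hRb x
        _ = M^(k+1) * ‖x‖ := by ring
  set u : X := (B^q) v with hu
  have hkey : v - ∑ k ∈ Finset.Icc q (2*q-1), hCoef q k • (R^k) v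
      = (Polynomial.aeval (R : X →ₗ[ℂ] X) Qp) (((R : X →ₗ[ℂ] X)^q) u) := by
    have h1 : v - ∑ k ∈ Finset.Icc q (2*q-1), hCoef q k • (R^k) v
        = (Polynomial.aeval (R : X →ₗ[ℂ] X) (Pq q)) v := by
      unfold Pq
      simp only [map_sub, map_one, map_sum, map_mul, Polynomial.aeval_C,
        Polynomial.aeval_X_pow, LinearMap.sub_apply,
        Module.End.one_apply, LinearMap.sum_apply, Module.End.mul_apply,
        Module.algebraMap_end_apply]
      congr 1
      apply Finset.sum_congr rfl
      intro k _
      rw [clm_pow_apply]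
    rw [h1, hQp, mul_comm, map_mul, Module.End.mul_apply]
    congr 1
    have h2 : (Polynomial.aeval (R : X →ₗ[ℂ] X)) (((Polynomial.X - Polynomial.C 1 : Polynomial ℂ))^q)
        = ((R : X →ₗ[ℂ] X) - 1)^q := by
      rw [map_pow, map_sub, Polynomial.aeval_X]
      simp
    rw [h2]
    exact resolvent_pow_identity hRes q v hv
  rw [hkey, Polynomial.aeval_eq_sum_range, LinearMap.sum_apply]
  calc ‖∑ j ∈ Finset.range (Qp.natDegree+1),
        (Qp.coeff j • ((R : X →ₗ[ℂ] X))^j) (((R : X →ₗ[ℂ] X)^q) u)‖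
      ≤ ∑ j ∈ Finset.range (Qp.natDegree+1),
        ‖(Qp.coeff j • ((R : X →ₗ[ℂ] X))^j) (((R : X →ₗ[ℂ] X)^q) u)‖ := norm_sum_le _ _
    _ ≤ ∑ j ∈ Finset.range (Qp.natDegree+1), ‖Qp.coeff j‖ * M^(j+q) * ‖u‖ := by
        apply Finset.sum_le_sum
        intro j _
        rw [LinearMap.smul_apply, norm_smul]
        calc ‖Qp.coeff j‖ * ‖((R : X →ₗ[ℂ] X)^j) (((R : X →ₗ[ℂ] X)^q) u)‖
            ≤ ‖Qp.coeff j‖ * (M^j * (M^q * ‖u‖)) := by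
              apply mul_le_mul_of_nonneg_left _ (norm_nonneg _)
              exact le_trans (hRpow j _)
                (mul_le_mul_of_nonneg_left (hRpow q u) (pow_nonneg hM0 j))
          _ = ‖Qp.coeff j‖ * M^(j+q) * ‖u‖ := by rw [pow_add]; ring
    _ = (∑ j ∈ Finset.range (Qp.natDegree+1), ‖Qp.coeff j‖ * M^(j+q)) * ‖u‖ :=
        (Finset.sum_mul _ _ _).symm
end

section
/- Let A generate a bounded C_0-semigroup with bound N on a Banach space X, let q ≥ 1 and n ∈ ℕ. Define H_{n,q} = Σ_{k=q}^{2q-1} h_k^q (√n (√n - A)^{-1})^k with h_k^q = C(2q-1,k)C(k-1,k-q)(-1)^{k-q}. Then there exist constants C(q,N) independent of n such that for all v ∈ 𝒟(A^q): ‖H_{n,q} v - v‖ ≤ C(q,N) n^{-q/2} ‖A^q v‖, and ‖H_{n,q}‖ ≤ C(q,N). -/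
open Filter Topology MeasureTheory

section Aux
open Finset

/-- partial alternating sum of binomials -/
lemma alt_sum_range (m : ℕ) : ∀ q : ℕ,
    ∑ k ∈ range (q + 1), (-1 : ℂ) ^ k * ((m + 1).choose k) = (-1) ^ q * (m.choose q) := by
  intro q
  induction q with
  | zero => simp
  | succ q ih =>
    rw [Finset.sum_range_succ, ih, Nat.choose_succ_succ (m) (q)]
    push_cast
    ring

lemma alt_sum_Icc {q m : ℕ} (hq : 1 ≤ q) (hqm : q ≤ m) :
    ∑ k ∈ Icc q m, (-1 : ℂ) ^ k * (m.choose k) = (-1) ^ q * ((m - 1).choose (q - 1)) := by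
  obtain ⟨m', rfl⟩ : ∃ m', m = m' + 1 := ⟨m - 1, by omega⟩
  obtain ⟨q', rfl⟩ : ∃ q', q = q' + 1 := ⟨q - 1, by omega⟩
  have hfull : ∑ k ∈ range (m' + 2), (-1 : ℂ) ^ k * ((m' + 1).choose k) =
      (-1) ^ (m' + 1) * (m'.choose (m' + 1)) := alt_sum_range m' (m' + 1)
  rw [Nat.choose_succ_self, Nat.cast_zero, mul_zero] at hfull
  have hsplit : ∑ k ∈ range (q' + 1), (-1 : ℂ) ^ k * ((m' + 1).choose k)
      + ∑ k ∈ Ico (q' + 1) (m' + 2), (-1 : ℂ) ^ k * ((m' + 1).choose k)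
      = ∑ k ∈ range (m' + 2), (-1 : ℂ) ^ k * ((m' + 1).choose k) := by
    rw [Finset.range_eq_Ico, Finset.range_eq_Ico]
    exact Finset.sum_Ico_consecutive (fun k => (-1 : ℂ) ^ k * ((m' + 1).choose k)) (by omega : 0 ≤ q' + 1) (by omega : q' + 1 ≤ m' + 2)
  rw [hfull, alt_sum_range m' q'] at hsplit
  have hIco : Ico (q' + 1) (m' + 2) = Icc (q' + 1) (m' + 1) := Finset.Ico_add_one_right_eq_Icc _ _
  rw [hIco] at hsplit
  simp only [Nat.add_sub_cancel]
  linear_combination hsplit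

lemma coeff_eq {q m : ℕ} (hq : 1 ≤ q) (hm1 : q ≤ m) (hm2 : m ≤ 2 * q - 1) :
    ∑ k ∈ Icc q m, ((2 * q - 1).choose k : ℂ) * ((-1) ^ (m - k) * ((2 * q - 1 - k).choose (m - k)))
      = hCoef q m := by
  have hstep : ∀ k ∈ Icc q m,
      ((2 * q - 1).choose k : ℂ) * ((-1) ^ (m - k) * ((2 * q - 1 - k).choose (m - k)))
        = ((2 * q - 1).choose m : ℂ) * ((-1) ^ m * ((-1) ^ k * (m.choose k))) := by
    intro k hk
    rw [Finset.mem_Icc] at hk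
    have hcast : ((2 * q - 1).choose m : ℂ) * (m.choose k)
        = ((2 * q - 1).choose k : ℂ) * ((2 * q - 1 - k).choose (m - k)) := by
      have := Nat.choose_mul (n := 2 * q - 1) (k := m) (s := k) hk.2
      exact_mod_cast congrArg (fun t : ℕ => (t : ℂ)) this
    have hb2 : ((-1 : ℂ)) ^ k * (-1) ^ k = 1 := by
      rw [← mul_pow]; norm_num
    have hsign : (-1 : ℂ) ^ (m - k) = (-1) ^ m * (-1) ^ k := by
      have h1 : (-1 : ℂ) ^ (m - k) * ((-1) ^ k * (-1) ^ k) = (-1) ^ m * (-1) ^ k := by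
        rw [← mul_assoc, ← pow_add, Nat.sub_add_cancel hk.2]
      rw [hb2, mul_one] at h1
      exact h1
    rw [hsign]
    linear_combination (-((-1 : ℂ) ^ m * (-1) ^ k)) * hcast
  rw [Finset.sum_congr rfl hstep, ← Finset.mul_sum, ← Finset.mul_sum,
    alt_sum_Icc hq hm1]
  have hsymm : (m - 1).choose (q - 1) = (m - 1).choose (m - q) := by
    have : m - q = (m - 1) - (q - 1) := by omega
    rw [this, Nat.choose_symm (by omega)]
  have hsign2 : (-1 : ℂ) ^ m * (-1) ^ q = (-1) ^ (m - q) := by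
    have h1 : (-1 : ℂ) ^ (m - q) * ((-1) ^ q * (-1) ^ q) = (-1) ^ m * (-1) ^ q := by
      rw [← mul_assoc, ← pow_add, Nat.sub_add_cancel hm1]
    have hb2 : ((-1 : ℂ)) ^ q * (-1) ^ q = 1 := by rw [← mul_pow]; norm_num
    rw [hb2, mul_one] at h1
    exact h1.symm
  rw [hCoef, hsymm]
  linear_combination ((2 * q - 1).choose m : ℂ) * (((m-1).choose (m-q) : ℂ)) * hsign2

lemma key_eval (q : ℕ) (hq : 1 ≤ q) (z : ℂ) :
    ∑ k ∈ Icc q (2 * q - 1), hCoef q k * z ^ k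
      = 1 - (1 - z) ^ q *
          ∑ k ∈ range q, ((2 * q - 1).choose k : ℂ) * (z ^ k * (1 - z) ^ (q - 1 - k)) := by
  have hQ : 2 * q - 1 + 1 = 2 * q := by omega
  -- full binomial sum equals 1
  have step1 : (1 : ℂ) = ∑ k ∈ range (2 * q), z ^ k * (1 - z) ^ (2 * q - 1 - k)
      * ((2 * q - 1).choose k) := by
    have h := add_pow z (1 - z) (2 * q - 1)
    rw [hQ] at h
    have hz : z + (1 - z) = 1 := by ring
    rw [hz, one_pow] at h
    exact h
  -- split into range q and Icc q (2q-1)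
  have step2 : ∑ k ∈ range (2 * q), z ^ k * (1 - z) ^ (2 * q - 1 - k) * ((2 * q - 1).choose k)
      = (∑ k ∈ range q, z ^ k * (1 - z) ^ (2 * q - 1 - k) * ((2 * q - 1).choose k))
        + ∑ k ∈ Icc q (2 * q - 1), z ^ k * (1 - z) ^ (2 * q - 1 - k) * ((2 * q - 1).choose k) := by
    rw [Finset.range_eq_Ico, ← Finset.sum_Ico_consecutive _ (by omega : 0 ≤ q) (by omega : q ≤ 2 * q),
      ← Finset.range_eq_Ico]
    congr 1
    rw [← hQ, Finset.Ico_add_one_right_eq_Icc]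
    simp
  -- the low part factors
  have step3 : ∑ k ∈ range q, z ^ k * (1 - z) ^ (2 * q - 1 - k) * ((2 * q - 1).choose k)
      = (1 - z) ^ q * ∑ k ∈ range q, ((2 * q - 1).choose k : ℂ) * (z ^ k * (1 - z) ^ (q - 1 - k)) := by
    rw [Finset.mul_sum]
    refine Finset.sum_congr rfl fun k hk => ?_
    rw [Finset.mem_range] at hk
    have : (2 : ℕ) * q - 1 - k = q + (q - 1 - k) := by omega
    rw [this, pow_add]
    ring
  -- the high part equals the hCoef sum
  have step4 : ∑ k ∈ Icc q (2 * q - 1), z ^ k * (1 - z) ^ (2 * q - 1 - k) * ((2 * q - 1).choose k)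
      = ∑ m ∈ Icc q (2 * q - 1), hCoef q m * z ^ m := by
    have expand : ∀ k ∈ Icc q (2 * q - 1),
        z ^ k * (1 - z) ^ (2 * q - 1 - k) * ((2 * q - 1).choose k)
          = ∑ m ∈ Icc k (2 * q - 1),
              ((2 * q - 1).choose k : ℂ) * ((-1) ^ (m - k) * ((2 * q - 1 - k).choose (m - k))) * z ^ m := by
      intro k hk
      rw [Finset.mem_Icc] at hk
      have hb := add_pow (-z) 1 (2 * q - 1 - k)
      have hz : -z + 1 = 1 - z := by ring
      rw [hz] at hb
      rw [hb, Finset.mul_sum, Finset.sum_mul]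
      have hrange : 2 * q - 1 - k + 1 = 2 * q - k := by omega
      rw [hrange]
      have hIcc : Icc k (2 * q - 1) = Ico k (2 * q) := by
        rw [← hQ, Finset.Ico_add_one_right_eq_Icc]
        simp
      rw [hIcc, Finset.sum_Ico_eq_sum_range]
      have hrange2 : 2 * q - k = 2 * q - k := rfl
      refine Finset.sum_congr rfl fun i _ => ?_
      have h1 : k + i - k = i := by omega
      rw [h1, one_pow, neg_pow, pow_add]
      ring
    rw [Finset.sum_congr rfl expand]
    rw [Finset.sum_comm' (s' := fun m => Icc q m) (t' := Icc q (2 * q - 1))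
      (by intro k m; simp only [Finset.mem_Icc]; omega)]
    refine Finset.sum_congr rfl fun m hm => ?_
    rw [Finset.mem_Icc] at hm
    rw [← Finset.sum_mul, coeff_eq hq hm.1 hm.2]
  rw [step2, step3, step4] at step1
  linear_combination -step1

lemma key_poly (q : ℕ) (hq : 1 ≤ q) :
    (∑ k ∈ Icc q (2 * q - 1), hCoef q k • (Polynomial.X : Polynomial ℂ) ^ k)
      = 1 - (∑ k ∈ range q, ((2 * q - 1).choose k : ℂ) •
            ((Polynomial.X : Polynomial ℂ) ^ k * (1 - Polynomial.X) ^ (q - 1 - k)))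
          * (1 - Polynomial.X) ^ q := by
  apply Polynomial.funext
  intro z
  simp only [Polynomial.eval_finset_sum, Polynomial.eval_smul, Polynomial.eval_pow,
    Polynomial.eval_mul, Polynomial.eval_sub, Polynomial.eval_one, Polynomial.eval_X,
    smul_eq_mul, Polynomial.eval_finset_sum]
  linear_combination key_eval q hq z

lemma key_op {E : Type*} [Ring E] [Algebra ℂ E] (q : ℕ) (hq : 1 ≤ q) (F : E) :
    ∑ k ∈ Icc q (2 * q - 1), hCoef q k • F ^ k
      = 1 - (∑ k ∈ range q, ((2 * q - 1).choose k : ℂ) •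
            (F ^ k * (1 - F) ^ (q - 1 - k))) * (1 - F) ^ q := by
  have h := congrArg (Polynomial.aeval F) (key_poly q hq)
  simpa only [map_sum, _root_.map_smul, map_pow, map_sub, map_mul, map_one,
    Polynomial.aeval_X] using h

end Aux

section AuxAnal
open Finset Set

variable {X : Type*} [NormedAddCommGroup X] [NormedSpace ℂ X] [CompleteSpace X]

/-- The resolvent at a positive real point is bounded by `N/μ`. -/
lemma resolvent_norm_bound (T : ℝ → X →L[ℂ] X) (N : ℝ) (hT : IsC0Semigroup T N)
    (A : X →ₗ[ℂ] X) (dom : Set X) (hA : IsGeneratorOf A dom T)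
    {μ : ℝ} (hμ : 0 < μ) (R : X →L[ℂ] X) (hR : IsResolventOf R (μ : ℂ) A dom) (x : X) :
    ‖R x‖ ≤ N / μ * ‖x‖ := by
  -- the function under the Laplace integral
  set f : ℝ → X := fun t => Real.exp (-μ * t) • T t x with hf
  have hNx : ∀ t : ℝ, 0 ≤ t → ‖T t x‖ ≤ N * ‖x‖ := fun t ht =>
    le_trans ((T t).le_opNorm x) (mul_le_mul_of_nonneg_right (hT.norm_bound t ht) (norm_nonneg x))
  have hNx0 : 0 ≤ N * ‖x‖ := le_trans (norm_nonneg _) (hNx 0 le_rfl)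
  have hcont : ContinuousOn f (Ici 0) :=
    (((Real.continuous_exp.comp (continuous_const.mul continuous_id)).continuousOn)).smul
      (hT.strong_cont x)
  have hmeas : AEStronglyMeasurable f (volume.restrict (Ioi 0)) :=
    (hcont.mono Ioi_subset_Ici_self).aestronglyMeasurable measurableSet_Ioi
  have hbound : ∀ t ∈ Ici (0:ℝ), ‖f t‖ ≤ N * ‖x‖ * Real.exp (-μ * t) := by
    intro t ht
    rw [hf]
    simp only [norm_smul, Real.norm_eq_abs, abs_of_pos (Real.exp_pos _)]
    rw [mul_comm (N * ‖x‖) _]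
    exact mul_le_mul_of_nonneg_left (hNx t ht) (Real.exp_pos _).le
  have hgint : IntegrableOn (fun t => N * ‖x‖ * Real.exp (-μ * t)) (Ioi 0) :=
    (exp_neg_integrableOn_Ioi 0 hμ).const_mul _
  have hint : IntegrableOn f (Ioi 0) := by
    refine Integrable.mono' hgint hmeas ?_
    filter_upwards [ae_restrict_mem measurableSet_Ioi] with t ht
    exact hbound t (Set.mem_Ici.2 (le_of_lt ht))
  set J : X := ∫ t in Ioi (0:ℝ), f t with hJ
  -- shifting the integration variable
  have hshift0 : ∀ h : ℝ, ∫ t in Ioi h, f t = ∫ t in Ioi (0:ℝ), f (t + h) := by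
    intro h
    rw [← integral_indicator measurableSet_Ioi, ← integral_indicator measurableSet_Ioi]
    rw [← integral_add_right_eq_self ((Ioi h).indicator f) h]
    congr 1
    funext t
    by_cases ht : (0:ℝ) < t
    · rw [Set.indicator_of_mem (by simpa using ht), Set.indicator_of_mem (by simpa using ht)]
    · rw [Set.indicator_of_notMem (by simpa using ht), Set.indicator_of_notMem (by simpa using ht)]
  have hshift : ∀ h : ℝ, 0 < h → (T h) J = Real.exp (μ * h) • ∫ t in Ioi h, f t := by
    intro h hh
    rw [hJ, ← ContinuousLinearMap.integral_comp_comm (T h) hint]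
    rw [hshift0 h, ← integral_smul]
    refine setIntegral_congr_fun measurableSet_Ioi fun t ht => ?_
    rw [Set.mem_Ioi] at ht
    have hTadd : T (h + t) x = T h (T t x) := by
      rw [hT.map_add h t hh.le ht.le]; rfl
    rw [hf]
    simp only
    rw [(T h).map_smul_of_tower, smul_smul, ← Real.exp_add]
    rw [show t + h = h + t by ring, hTadd]
    congr 1
    ring_nf
  -- splitting the integral
  have hsplit : ∀ h : ℝ, 0 < h →
      (∫ t in Ioc 0 h, f t) + (∫ t in Ioi h, f t) = J := by
    intro h hh
    rw [hJ, ← Set.Ioc_union_Ioi_eq_Ioi hh.le]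
    exact (setIntegral_union Set.Ioc_disjoint_Ioi_same measurableSet_Ioi
      (hint.mono_set Set.Ioc_subset_Ioi_self)
      (hint.mono_set (Set.Ioi_subset_Ioi hh.le))).symm
  have hIocnorm : ∀ h : ℝ, 0 < h → ‖∫ t in Ioc 0 h, f t‖ ≤ (N * ‖x‖) * h := by
    intro h hh
    have := norm_setIntegral_le_of_norm_le_const (C := N * ‖x‖) (μ := volume)
      (s := Ioc (0:ℝ) h) (f := f) (by simp [Real.volume_Ioc])
      (fun t ht => by
        have h1 : ‖f t‖ ≤ N * ‖x‖ * Real.exp (-μ * t) := hbound t (Set.mem_Ici.2 (le_of_lt ht.1))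
        have h2 : Real.exp (-μ * t) ≤ 1 := by
          rw [Real.exp_le_one_iff]
          nlinarith [ht.1]
        nlinarith [Real.exp_pos (-μ * t), norm_nonneg (f t)])
    calc ‖∫ t in Ioc 0 h, f t‖ ≤ (N * ‖x‖) * (volume (Ioc (0:ℝ) h)).toReal := this
    _ = (N * ‖x‖) * h := by
        rw [Real.volume_Ioc, ENNReal.toReal_ofReal (by linarith)]
        ring_nf
  -- limit of the tail integral
  have lim1 : Tendsto (fun h : ℝ => ∫ t in Ioi h, f t) (𝓝[>] 0) (𝓝 J) := by
    have h0 : Tendsto (fun h : ℝ => ∫ t in Ioc 0 h, f t) (𝓝[>] 0) (𝓝 0) := by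
      have hev : ∀ᶠ h in 𝓝[>] (0:ℝ), ‖∫ t in Ioc 0 h, f t‖ ≤ (N * ‖x‖) * h := by
        filter_upwards [self_mem_nhdsWithin] with h hh
        exact hIocnorm h hh
      have htend : Tendsto (fun h : ℝ => (N * ‖x‖) * h) (𝓝[>] 0) (𝓝 0) := by
        have : Tendsto (fun h : ℝ => (N * ‖x‖) * h) (𝓝 0) (𝓝 ((N * ‖x‖) * 0)) :=
          (continuous_const.mul continuous_id).tendsto 0
        rw [mul_zero] at this
        exact this.mono_left nhdsWithin_le_nhds
      exact squeeze_zero_norm' hev htend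
    have h1 : Tendsto (fun h : ℝ => J - ∫ t in Ioc 0 h, f t) (𝓝[>] 0) (𝓝 (J - 0)) :=
      tendsto_const_nhds.sub h0
    rw [sub_zero] at h1
    refine h1.congr' ?_
    filter_upwards [self_mem_nhdsWithin] with h hh
    have := hsplit h hh
    rw [← this]
    abel
  -- the slope of the exponential
  have lim2 : Tendsto (fun h : ℝ => h⁻¹ * (Real.exp (μ * h) - 1)) (𝓝[>] 0) (𝓝 μ) := by
    have hd : HasDerivAt (fun s : ℝ => Real.exp (μ * s)) μ 0 := by
      have := (Real.hasDerivAt_exp (μ * 0)).comp 0 ((hasDerivAt_id (0:ℝ)).const_mul μ)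
      simp at this; exact this
    have := hasDerivAt_iff_tendsto_slope.1 hd
    have h2 := this.mono_left (nhdsWithin_mono _
      (fun t (ht : t ∈ Set.Ioi (0:ℝ)) => (ne_of_gt ht : t ≠ 0)))
    refine h2.congr' ?_
    filter_upwards [self_mem_nhdsWithin] with h hh
    simp only [slope_fun_def, vsub_eq_sub, smul_eq_mul, mul_zero, Real.exp_zero, sub_zero]
  -- the averaged integral tends to x
  have hf0 : f 0 = x := by
    rw [hf]
    simp [hT.map_zero]
  have lim3 : Tendsto (fun h : ℝ => h⁻¹ • ∫ t in Ioc 0 h, f t) (𝓝[>] 0) (𝓝 x) := by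
    rw [Metric.tendsto_nhdsWithin_nhds]
    intro ε hε
    have hc : ContinuousWithinAt f (Ici 0) 0 := hcont 0 Set.self_mem_Ici
    rw [Metric.continuousWithinAt_iff] at hc
    obtain ⟨δ, hδ, hcδ⟩ := hc (ε / 2) (by linarith)
    refine ⟨δ, hδ, fun h hh hhδ => ?_⟩
    rw [Set.mem_Ioi] at hh
    rw [Real.dist_eq, sub_zero, abs_of_pos hh] at hhδ
    have hconst : ∫ _ in Ioc (0:ℝ) h, x = h • x := by
      rw [setIntegral_const, Real.volume_real_Ioc, max_eq_left (by linarith)]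
      norm_num
    have hnorm : ‖(∫ t in Ioc 0 h, f t) - h • x‖ ≤ (ε / 2) * h := by
      rw [← hconst, ← integral_sub (hint.mono_set Set.Ioc_subset_Ioi_self)
        (integrableOn_const (by simp [Real.volume_Ioc]))]
      have := norm_setIntegral_le_of_norm_le_const (C := ε / 2) (μ := volume)
        (s := Ioc (0:ℝ) h) (f := fun t => f t - x)
        (by simp [Real.volume_Ioc])
        (fun t ht => by
          have h1 : dist (f t) (f 0) < ε / 2 := by
            apply hcδ (le_of_lt ht.1)
            rw [Real.dist_eq, sub_zero, abs_of_pos ht.1]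
            exact lt_of_le_of_lt ht.2 hhδ
          rw [hf0] at h1
          exact le_of_lt (dist_eq_norm (f t) x ▸ h1))
      calc ‖∫ t in Ioc 0 h, (f t - x)‖ ≤ (ε/2) * (volume (Ioc (0:ℝ) h)).toReal := this
      _ = (ε/2) * h := by rw [Real.volume_Ioc, ENNReal.toReal_ofReal (by linarith)]; ring_nf
    rw [dist_eq_norm]
    have heq : h⁻¹ • (∫ t in Ioc 0 h, f t) - x = h⁻¹ • ((∫ t in Ioc 0 h, f t) - h • x) := by
      rw [smul_sub, smul_smul, inv_mul_cancel₀ (ne_of_gt hh), one_smul]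
    rw [heq, norm_smul, Real.norm_eq_abs, abs_of_pos (inv_pos.2 hh)]
    calc h⁻¹ * ‖(∫ t in Ioc 0 h, f t) - h • x‖ ≤ h⁻¹ * ((ε/2) * h) :=
      mul_le_mul_of_nonneg_left hnorm (inv_pos.2 hh).le
    _ = ε / 2 := by field_simp
    _ < ε := by linarith
  -- the derivative at 0 of T h J
  have key : Tendsto (fun h : ℝ => ((h : ℝ) : ℂ)⁻¹ • (T h J - J)) (𝓝[>] 0)
      (𝓝 (μ • J - x)) := by
    have h1 : Tendsto (fun h : ℝ =>
        (h⁻¹ * (Real.exp (μ * h) - 1)) • (∫ t in Ioi h, f t) - h⁻¹ • ∫ t in Ioc 0 h, f t)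
        (𝓝[>] 0) (𝓝 (μ • J - x)) := (lim2.smul lim1).sub lim3
    refine h1.congr' ?_
    filter_upwards [self_mem_nhdsWithin] with h hh
    rw [Set.mem_Ioi] at hh
    have hcoe : ((h : ℝ) : ℂ)⁻¹ • (T h J - J) = (h : ℝ)⁻¹ • (T h J - J) := by
      rw [← Complex.ofReal_inv, Complex.coe_smul]
    rw [hcoe, hshift h hh]
    have hKJ : (∫ t in Ioc 0 h, f t) + (∫ t in Ioi h, f t) = J := hsplit h hh
    set K := ∫ t in Ioi h, f t
    set I := ∫ t in Ioc 0 h, f t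
    set a := Real.exp (μ * h)
    rw [← hKJ]
    module
  -- identify R x with the Laplace integral
  have hmemJ : J ∈ dom := hA.mem_of_deriv J _ key
  have hAJ : A J = μ • J - x := tendsto_nhds_unique (hA.deriv_mem J hmemJ) key
  have hRx : R x = J := by
    have h2 := hR.2 J hmemJ
    rw [hAJ, Complex.coe_smul] at h2
    simpa using h2
  -- final bound
  rw [hRx, hJ]
  have h3 : ‖∫ t in Ioi (0:ℝ), f t‖ ≤ ∫ t in Ioi (0:ℝ), N * ‖x‖ * Real.exp (-μ * t) := by
    refine norm_integral_le_of_norm_le hgint ?_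
    filter_upwards [ae_restrict_mem measurableSet_Ioi] with t ht
    exact hbound t (Set.mem_Ici.2 (le_of_lt ht))
  have h4 : ∫ t in Ioi (0:ℝ), N * ‖x‖ * Real.exp (-μ * t) = N * ‖x‖ * μ⁻¹ := by
    rw [show (fun t => N * ‖x‖ * Real.exp (-μ * t)) = fun t => N * ‖x‖ * Real.exp (-μ * t) from rfl,
      MeasureTheory.integral_const_mul]
    congr 1
    have hderiv : ∀ t ∈ Ioi (0:ℝ), HasDerivAt (fun s : ℝ => -μ⁻¹ * Real.exp (-μ * s))
        (Real.exp (-μ * t)) t := by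
      intro t _
      have h5 := ((Real.hasDerivAt_exp (-μ * t)).comp t ((hasDerivAt_id t).const_mul (-μ))).const_mul (-μ⁻¹)
      exact h5.congr_deriv (by linear_combination Real.exp (-μ * t) * inv_mul_cancel₀ hμ.ne')
    have hcont2 : ContinuousWithinAt (fun s : ℝ => -μ⁻¹ * Real.exp (-μ * s)) (Ici 0) 0 :=
      (continuous_const.mul (Real.continuous_exp.comp (continuous_const.mul continuous_id))).continuousWithinAt
    have htend : Tendsto (fun s : ℝ => -μ⁻¹ * Real.exp (-μ * s)) atTop (𝓝 0) := by
      have hexp : Tendsto (fun s : ℝ => Real.exp (-(μ * s))) atTop (𝓝 0) :=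
        Real.tendsto_exp_neg_atTop_nhds_zero.comp (Tendsto.const_mul_atTop hμ tendsto_id)
      have := hexp.const_mul (-μ⁻¹)
      rw [mul_zero] at this
      refine this.congr fun s => ?_
      ring_nf
    rw [integral_Ioi_of_hasDerivAt_of_tendsto hcont2 hderiv (exp_neg_integrableOn_Ioi 0 hμ) htend]
    simp
  calc ‖∫ t in Ioi (0:ℝ), f t‖ ≤ N * ‖x‖ * μ⁻¹ := h3.trans (le_of_eq h4)
  _ = N / μ * ‖x‖ := by ring

lemma resolvent_pow_apply (A : X →ₗ[ℂ] X) (dom : Set X) (μ : ℂ) (R : X →L[ℂ] X)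
    (hR : IsResolventOf R μ A dom) :
    ∀ (j : ℕ) (v : X), (∀ i < j, (A ^ i) v ∈ dom) →
      ((μ • R - 1) ^ j) v = (R ^ j) ((A ^ j) v) := by
  intro j
  induction j with
  | zero => intro v _; simp
  | succ j ih =>
    intro v hv
    have hv0 : v ∈ dom := by simpa using hv 0 (Nat.succ_pos j)
    have hGv : (μ • R - 1) v = R (A v) := by
      have h2 : R (μ • v - A v) = v := hR.2 v hv0
      have h3 : μ • R v - R (A v) = v := by
        rw [map_sub, _root_.map_smul] at h2
        exact h2
      have h4 : (μ • R - 1) v = μ • R v - v := by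
        simp [ContinuousLinearMap.sub_apply, ContinuousLinearMap.smul_apply]
      rw [h4, sub_eq_iff_eq_add.mp h3]
      abel
    have hcomm : Commute R ((μ • R - 1) ^ j) :=
      (((Commute.refl R).smul_right μ).sub_right (Commute.one_right R)).pow_right j
    calc ((μ • R - 1) ^ (j + 1)) v = ((μ • R - 1) ^ j) ((μ • R - 1) v) := by
          rw [pow_succ]; rfl
    _ = ((μ • R - 1) ^ j) (R (A v)) := by rw [hGv]
    _ = R (((μ • R - 1) ^ j) (A v)) := by
          have h5 := congrArg (fun L : X →L[ℂ] X => L (A v)) hcomm.eq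
          simpa [ContinuousLinearMap.mul_apply] using h5.symm
    _ = R ((R ^ j) ((A ^ j) (A v))) := by
          rw [ih (A v) (fun i hi => by
            have := hv (i + 1) (by omega)
            rw [pow_succ] at this
            exact this)]
    _ = (R ^ (j + 1)) ((A ^ (j + 1)) v) := by
          rw [pow_succ A j, pow_succ' R j]
          rfl

lemma pow_apply_norm_le (R : X →L[ℂ] X) (c : ℝ) (hc : 0 ≤ c)
    (hRb : ∀ x : X, ‖R x‖ ≤ c * ‖x‖) :
    ∀ (j : ℕ) (w : X), ‖(R ^ j) w‖ ≤ c ^ j * ‖w‖ := by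
  intro j
  induction j with
  | zero => intro w; simp
  | succ j ih =>
    intro w
    have h1 : (R ^ (j + 1)) w = R ((R ^ j) w) := by rw [pow_succ' R j]; rfl
    rw [h1]
    calc ‖R ((R ^ j) w)‖ ≤ c * ‖(R ^ j) w‖ := hRb _
    _ ≤ c * (c ^ j * ‖w‖) := mul_le_mul_of_nonneg_left (ih w) hc
    _ = c ^ (j + 1) * ‖w‖ := by ring

lemma opnorm_pow_le (F : X →L[ℂ] X) (M : ℝ) (hF : ‖F‖ ≤ M) :
    ∀ k : ℕ, ‖F ^ k‖ ≤ M ^ k := by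
  have hM : 0 ≤ M := le_trans (norm_nonneg F) hF
  intro k
  induction k with
  | zero => simp only [pow_zero]; exact ContinuousLinearMap.norm_id_le
  | succ k ih =>
    rw [pow_succ, pow_succ]
    calc ‖F ^ k * F‖ ≤ ‖F ^ k‖ * ‖F‖ := norm_mul_le _ _
    _ ≤ M ^ k * M := mul_le_mul ih hF (norm_nonneg F) (pow_nonneg hM k)

end AuxAnal

/-- For `H_{n,q} = Σ_{k=q}^{2q-1} h_k^q (√n (√n - A)^{-1})^k` there are constants
`C(q,N)` independent of `n` with `‖H_{n,q} v - v‖ ≤ C(q,N) n^{-q/2} ‖A^q v‖` for `v ∈ 𝒟(A^q)`,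
and `‖H_{n,q}‖ ≤ C(q,N)`. -/
theorem stmt_10 {X : Type*} [NormedAddCommGroup X] [NormedSpace ℂ X] [CompleteSpace X]
    (T : ℝ → X →L[ℂ] X) (N : ℝ) (hT : IsC0Semigroup T N)
    (A : X →ₗ[ℂ] X) (dom : Set X) (hA : IsGeneratorOf A dom T)
    (q : ℕ) (hq : 1 ≤ q) :
    ∃ C : ℝ, ∀ n : ℕ, 1 ≤ n → ∀ Rn : X →L[ℂ] X,
      IsResolventOf Rn (Real.sqrt n : ℂ) A dom →
      ‖∑ k ∈ Finset.Icc q (2 * q - 1), hCoef q k • ((Real.sqrt n : ℂ) • Rn) ^ k‖ ≤ C ∧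
      ∀ v : X, (∀ i < q, (A ^ i) v ∈ dom) →
        ‖(∑ k ∈ Finset.Icc q (2 * q - 1), hCoef q k • ((Real.sqrt n : ℂ) • Rn) ^ k) v - v‖
          ≤ C / (n : ℝ) ^ ((q : ℝ) / 2) * ‖(A ^ q) v‖ := by
  classical
  set M : ℝ := max N 1 with hM
  have hM1 : (1:ℝ) ≤ M := le_max_right _ _
  have hM0 : (0:ℝ) ≤ M := by linarith
  set C₂ : ℝ := ∑ k ∈ Finset.range q,
    ((2 * q - 1).choose k : ℝ) * (M ^ k * (1 + M) ^ (q - 1 - k)) with hC₂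
  have hC₂0 : 0 ≤ C₂ := Finset.sum_nonneg fun k _ => by positivity
  set C₁ : ℝ := 1 + C₂ * (1 + M) ^ q with hC₁
  have hC₁0 : 0 ≤ C₁ := by positivity
  refine ⟨C₁ + C₂ * M ^ q, ?_⟩
  intro n hn Rn hRn
  set μ : ℝ := Real.sqrt n with hμdef
  have hnpos : (0:ℝ) < n := by exact_mod_cast hn
  have hμpos : 0 < μ := Real.sqrt_pos.2 hnpos
  have hRb : ∀ x : X, ‖Rn x‖ ≤ N / μ * ‖x‖ :=
    resolvent_norm_bound T N hT A dom hA hμpos Rn hRn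
  have hRb' : ∀ x : X, ‖Rn x‖ ≤ M / μ * ‖x‖ := fun x => (hRb x).trans (by
    have : N / μ ≤ M / μ := (div_le_div_iff_of_pos_right hμpos).mpr (le_max_left N 1)
    exact mul_le_mul_of_nonneg_right this (norm_nonneg x))
  set F : X →L[ℂ] X := (μ : ℂ) • Rn with hF
  have hFnorm : ‖F‖ ≤ M := by
    apply ContinuousLinearMap.opNorm_le_bound _ hM0
    intro x
    rw [hF, ContinuousLinearMap.smul_apply, norm_smul, Complex.norm_real,
      Real.norm_eq_abs, abs_of_pos hμpos]
    calc μ * ‖Rn x‖ ≤ μ * (M / μ * ‖x‖) :=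
      mul_le_mul_of_nonneg_left (hRb' x) hμpos.le
    _ = M * ‖x‖ := by field_simp
  have h1Fnorm : ‖(1:X →L[ℂ] X) - F‖ ≤ 1 + M := by
    calc ‖(1:X →L[ℂ] X) - F‖ ≤ ‖(1:X →L[ℂ] X)‖ + ‖F‖ := norm_sub_le _ _
    _ ≤ 1 + M := add_le_add ContinuousLinearMap.norm_id_le hFnorm
  have hkey := key_op (E := X →L[ℂ] X) q hq F
  set B : X →L[ℂ] X := ∑ k ∈ Finset.range q,
    ((2 * q - 1).choose k : ℂ) • (F ^ k * (1 - F) ^ (q - 1 - k)) with hB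
  have hBnorm : ‖B‖ ≤ C₂ := by
    rw [hB, hC₂]
    refine (norm_sum_le _ _).trans (Finset.sum_le_sum fun k _ => ?_)
    rw [norm_smul (((2 * q - 1).choose k : ℂ)) (F ^ k * (1 - F) ^ (q - 1 - k)), Complex.norm_natCast]
    refine mul_le_mul_of_nonneg_left ?_ (Nat.cast_nonneg _)
    calc ‖F ^ k * (1 - F) ^ (q - 1 - k)‖ ≤ ‖F ^ k‖ * ‖(1 - F) ^ (q - 1 - k)‖ := norm_mul_le _ _
    _ ≤ M ^ k * (1 + M) ^ (q - 1 - k) :=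
      mul_le_mul (opnorm_pow_le F M hFnorm k) (opnorm_pow_le _ _ h1Fnorm _)
        (norm_nonneg _) (by positivity)
  have hHnorm : ‖∑ k ∈ Finset.Icc q (2 * q - 1),
      hCoef q k • ((Real.sqrt n : ℂ) • Rn) ^ k‖ ≤ C₁ := by
    rw [show ((Real.sqrt n : ℝ) : ℂ) = (μ : ℂ) from rfl, ← hF, hkey]
    calc ‖(1:X →L[ℂ] X) - B * (1 - F) ^ q‖
        ≤ ‖(1:X →L[ℂ] X)‖ + ‖B * (1 - F) ^ q‖ := norm_sub_le _ _
    _ ≤ 1 + ‖B‖ * ‖(1 - F) ^ q‖ :=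
        add_le_add ContinuousLinearMap.norm_id_le (norm_mul_le _ _)
    _ ≤ 1 + C₂ * (1 + M) ^ q := by
        refine add_le_add_right (mul_le_mul hBnorm (opnorm_pow_le _ _ h1Fnorm q)
          (norm_nonneg _) hC₂0) 1
    _ = C₁ := hC₁.symm
  constructor
  · exact hHnorm.trans (le_add_of_nonneg_right (by positivity))
  intro v hv
  have hP2 : ((F - 1) ^ q) v = (Rn ^ q) ((A ^ q) v) := by
    rw [hF]
    exact resolvent_pow_apply A dom (μ : ℂ) Rn hRn q v hv
  have happly : (∑ k ∈ Finset.Icc q (2 * q - 1),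
      hCoef q k • ((Real.sqrt n : ℂ) • Rn) ^ k) v - v = -(B (((1 - F) ^ q) v)) := by
    rw [show ((Real.sqrt n : ℝ) : ℂ) = (μ : ℂ) from rfl, ← hF, hkey]
    simp only [ContinuousLinearMap.sub_apply, ContinuousLinearMap.one_apply,
      ContinuousLinearMap.mul_apply]
    abel
  have hnorm_eq : ‖((1 - F) ^ q) v‖ = ‖((F - 1) ^ q) v‖ := by
    have h6 : (1 - F : X →L[ℂ] X) = (-1 : ℂ) • (F - 1) := by
      rw [neg_smul, one_smul, neg_sub]
    rw [h6, smul_pow, ContinuousLinearMap.smul_apply, norm_smul, norm_pow,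
      norm_neg, norm_one, one_pow, one_mul]
  have hRq : ‖(Rn ^ q) ((A ^ q) v)‖ ≤ (M / μ) ^ q * ‖(A ^ q) v‖ :=
    pow_apply_norm_le Rn (M / μ) (by positivity) hRb' q _
  have hμq : μ ^ q = (n : ℝ) ^ ((q : ℝ) / 2) := by
    have hsq : μ = (n:ℝ) ^ ((1:ℝ)/2) := by rw [hμdef, Real.sqrt_eq_rpow]
    rw [hsq, ← Real.rpow_natCast ((n:ℝ) ^ ((1:ℝ)/2)) q, ← Real.rpow_mul hnpos.le]
    congr 1
    ring
  have hμqpos : 0 < (n : ℝ) ^ ((q : ℝ) / 2) := by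
    rw [← hμq]; positivity
  calc ‖(∑ k ∈ Finset.Icc q (2 * q - 1),
      hCoef q k • ((Real.sqrt n : ℂ) • Rn) ^ k) v - v‖
      = ‖B (((1 - F) ^ q) v)‖ := by rw [happly, norm_neg]
  _ ≤ ‖B‖ * ‖((1 - F) ^ q) v‖ := B.le_opNorm _
  _ ≤ C₂ * ((M / μ) ^ q * ‖(A ^ q) v‖) := by
      rw [hnorm_eq, hP2]
      exact mul_le_mul hBnorm hRq (norm_nonneg _) hC₂0
  _ = C₂ * M ^ q / μ ^ q * ‖(A ^ q) v‖ := by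
      rw [div_pow]
      ring
  _ ≤ (C₁ + C₂ * M ^ q) / (n : ℝ) ^ ((q : ℝ) / 2) * ‖(A ^ q) v‖ := by
      rw [hμq]
      refine mul_le_mul_of_nonneg_right ?_ (norm_nonneg _)
      exact (div_le_div_iff_of_pos_right hμqpos).mpr (le_add_of_nonneg_left hC₁0)
end

section
/- For the m-th Laguerre polynomial L_m(x) = Σ_{k=0}^m C(m,k) (-1)^k х^k / k!, and a generator A of a bounded C_0-semigroup with bound N on a Banach space, with γ > 0 and m ≥ 1: A^{m-1}(γ - A)^{-m} = ∫₀^∞ e^{sA} e^{-γs} (-1)^{m-1} L_{m-1}(γ s) ds. -/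
open Filter Topology MeasureTheory

/-- The `m`-th Laguerre polynomial `L_m(x) = Σ_{k=0}^m C(m,k) (-1)^k x^k / k!`. -/
noncomputable def laguerre (m : ℕ) (x : ℝ) : ℝ :=
  ∑ k ∈ Finset.range (m + 1), (m.choose k : ℝ) * (-1) ^ k * x ^ k / (Nat.factorial k : ℝ)

namespace Stmt11Aux

open Set

variable {X : Type*} [NormedAddCommGroup X] [NormedSpace ℂ X] [CompleteSpace X]

/-- The basic weighted Laplace-type integral `∫_0^∞ s^n e^{-γ s} T(s) v ds`. -/
noncomputable def Fn (T : ℝ → X →L[ℂ] X) (γ : ℝ) (n : ℕ) (v : X) : X :=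
  ∫ s in Set.Ioi (0:ℝ), (s ^ n * Real.exp (-γ * s)) • T s v

variable {T : ℝ → X →L[ℂ] X} {N : ℝ} {γ : ℝ} {A : X →ₗ[ℂ] X} {dom : Set X}

lemma scalar_cont (n : ℕ) : Continuous (fun s : ℝ => s ^ n * Real.exp (-γ * s)) := by
  fun_prop

lemma scalar_int (hγ : 0 < γ) (n : ℕ) :
    IntegrableOn (fun s : ℝ => s ^ n * Real.exp (-γ * s)) (Ioi 0) := by
  apply integrable_of_isBigO_exp_neg (half_pos hγ) (scalar_cont n).continuousOn
  have h0 : Tendsto (fun s : ℝ => s ^ n * Real.exp (-(γ/2) * s)) atTop (𝓝 0) := by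
    simpa [Real.rpow_natCast] using
      tendsto_rpow_mul_exp_neg_mul_atTop_nhds_zero (n : ℝ) (γ/2) (half_pos hγ)
  rw [Asymptotics.isBigO_iff]
  refine ⟨1, ?_⟩
  filter_upwards [eventually_ge_atTop (0:ℝ), h0.eventually_lt_const one_pos] with s hs h1
  have hexp : Real.exp (-γ * s) = Real.exp (-(γ/2) * s) * Real.exp (-(γ/2) * s) := by
    rw [← Real.exp_add]; ring_nf
  have h2 : s ^ n * Real.exp (-γ * s) ≤ Real.exp (-(γ/2) * s) := by
    rw [hexp, ← mul_assoc]
    nlinarith [Real.exp_pos (-(γ/2) * s), pow_nonneg hs n, Real.exp_pos (-γ*s)]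
  rw [Real.norm_eq_abs, Real.norm_eq_abs, abs_of_nonneg (by positivity),
    abs_of_nonneg (Real.exp_pos _).le, one_mul]
  exact h2

lemma vec_int (hT : IsC0Semigroup T N) (hγ : 0 < γ) (n : ℕ) (v : X) :
    IntegrableOn (fun s : ℝ => (s ^ n * Real.exp (-γ * s)) • T s v) (Ioi 0) := by
  have hcont : ContinuousOn (fun s : ℝ => (s ^ n * Real.exp (-γ * s)) • T s v) (Ioi 0) :=
    (scalar_cont n).continuousOn.smul ((hT.strong_cont v).mono Ioi_subset_Ici_self)
  refine Integrable.mono' (((scalar_int hγ n).const_mul (N * ‖v‖)))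
    (hcont.aestronglyMeasurable measurableSet_Ioi) ?_
  filter_upwards [self_mem_ae_restrict measurableSet_Ioi] with s hs
  have hs0 : (0:ℝ) ≤ s := (le_of_lt hs)
  have h1 : ‖T s v‖ ≤ N * ‖v‖ :=
    le_trans ((T s).le_opNorm v) (by
      have := hT.norm_bound s hs0
      exact mul_le_mul_of_nonneg_right this (norm_nonneg v))
  rw [norm_smul, Real.norm_eq_abs, abs_of_nonneg (by positivity)]
  calc s ^ n * Real.exp (-γ * s) * ‖T s v‖
      ≤ s ^ n * Real.exp (-γ * s) * (N * ‖v‖) :=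
        mul_le_mul_of_nonneg_left h1 (by positivity)
    _ = N * ‖v‖ * (s ^ n * Real.exp (-γ * s)) := by ring

lemma deriv_T (hT : IsC0Semigroup T N) (hA : IsGeneratorOf A dom T)
    {x : X} (hx : x ∈ dom) {s : ℝ} (hs : 0 ≤ s) :
    HasDerivWithinAt (fun u => T u x) (T s (A x)) (Ioi s) s := by
  rw [hasDerivWithinAt_iff_tendsto_slope]
  have hss : (Ioi s) \ {s} = Ioi s := by
    simp [Set.diff_singleton_eq_self, Set.mem_Ioi]
  rw [hss]
  have hmap : Tendsto (fun y : ℝ => y - s) (𝓝[>] s) (𝓝[>] 0) := by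
    rw [tendsto_nhdsWithin_iff]
    constructor
    · have : Tendsto (fun y : ℝ => y - s) (𝓝 s) (𝓝 (s - s)) :=
        (continuous_id.sub continuous_const).tendsto s
      rw [sub_self] at this
      exact this.mono_left nhdsWithin_le_nhds
    · filter_upwards [self_mem_nhdsWithin] with y hy
      exact sub_pos.mpr (mem_Ioi.mp hy)
  have hgen : Tendsto (fun t : ℝ => (t⁻¹ : ℝ) • (T t x - x)) (𝓝[>] 0) (𝓝 (A x)) := by
    have := hA.deriv_mem x hx
    refine this.congr (fun t => ?_)
    rw [← Complex.coe_smul, Complex.ofReal_inv]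
  have K : Tendsto (fun y : ℝ => T s ((y - s)⁻¹ • (T (y - s) x - x))) (𝓝[>] s)
      (𝓝 (T s (A x))) :=
    ((T s).continuous.tendsto (A x)).comp (hgen.comp hmap)
  refine K.congr' ?_
  filter_upwards [self_mem_nhdsWithin] with y hy
  have hys : 0 < y - s := sub_pos.mpr hy
  have hTy : T y x = T s (T (y - s) x) := by
    have := hT.map_add s (y - s) hs hys.le
    rw [add_sub_cancel] at this
    rw [this]; rfl
  rw [slope_def_module]
  rw [hTy, ← (T s).map_sub, ← (T s).map_smul_of_tower]

lemma boundary_tendsto (hT : IsC0Semigroup T N) (hγ : 0 < γ) (n : ℕ) (x : X) :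
    Tendsto (fun M : ℝ => (M ^ n * Real.exp (-γ * M)) • T M x) atTop (𝓝 0) := by
  apply squeeze_zero_norm' (a := fun M => N * ‖x‖ * (M ^ n * Real.exp (-γ * M)))
  · filter_upwards [eventually_ge_atTop (0:ℝ)] with M hM
    rw [norm_smul, Real.norm_eq_abs, abs_of_nonneg (by positivity)]
    have h1 : ‖T M x‖ ≤ N * ‖x‖ :=
      le_trans ((T M).le_opNorm x)
        (mul_le_mul_of_nonneg_right (hT.norm_bound M hM) (norm_nonneg x))
    calc M ^ n * Real.exp (-γ * M) * ‖T M x‖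
        ≤ M ^ n * Real.exp (-γ * M) * (N * ‖x‖) :=
          mul_le_mul_of_nonneg_left h1 (by positivity)
      _ = N * ‖x‖ * (M ^ n * Real.exp (-γ * M)) := by ring
  · have h0 : Tendsto (fun M : ℝ => M ^ n * Real.exp (-γ * M)) atTop (𝓝 0) := by
      simpa [Real.rpow_natCast] using
        tendsto_rpow_mul_exp_neg_mul_atTop_nhds_zero (n : ℝ) γ hγ
    simpa using h0.const_mul (N * ‖x‖)

/-- Master integration-by-parts identity. -/
lemma master (hT : IsC0Semigroup T N) (hA : IsGeneratorOf A dom T) (hγ : 0 < γ)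
    (n : ℕ) {x : X} (hx : x ∈ dom) :
    Fn T γ n (A x) + (n : ℝ) • Fn T γ (n-1) x + (-γ) • Fn T γ n x
      = -(((0:ℝ) ^ n) • x) := by
  set D : ℝ → X := fun s =>
    (s ^ n * Real.exp (-γ * s)) • T s (A x)
    + (n : ℝ) • ((s ^ (n-1) * Real.exp (-γ * s)) • T s x)
    + (-γ) • ((s ^ n * Real.exp (-γ * s)) • T s x) with hD
  have i1 : IntegrableOn (fun s : ℝ => (s ^ n * Real.exp (-γ * s)) • T s (A x)) (Ioi 0) :=
    vec_int hT hγ n (A x)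
  have i2 : IntegrableOn (fun s : ℝ => (n:ℝ) • ((s ^ (n-1) * Real.exp (-γ * s)) • T s x))
      (Ioi 0) := (vec_int hT hγ (n-1) x).smul (n:ℝ)
  have i3 : IntegrableOn (fun s : ℝ => (-γ) • ((s ^ n * Real.exp (-γ * s)) • T s x))
      (Ioi 0) := (vec_int hT hγ n x).smul (-γ)
  have i12 : IntegrableOn (fun s : ℝ => (s ^ n * Real.exp (-γ * s)) • T s (A x)
      + (n:ℝ) • ((s ^ (n-1) * Real.exp (-γ * s)) • T s x)) (Ioi 0) := i1.add i2
  have hDint : IntegrableOn D (Ioi 0) := i12.add i3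
  have hDcont : ContinuousOn D (Ici 0) := by
    have c1 := (scalar_cont (γ := γ) n).continuousOn.smul (hT.strong_cont (A x))
    have c2 := (scalar_cont (γ := γ) (n-1)).continuousOn.smul (hT.strong_cont x)
    have c3 := (scalar_cont (γ := γ) n).continuousOn.smul (hT.strong_cont x)
    exact (c1.add ((c2.const_smul (n:ℝ)))).add (c3.const_smul (-γ))
  have hFTC : ∀ M : ℝ, 0 ≤ M →
      ∫ s in (0:ℝ)..M, D s
        = (M ^ n * Real.exp (-γ * M)) • T M x - ((0:ℝ) ^ n) • x := by
    intro M hM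
    have key := intervalIntegral.integral_eq_sub_of_hasDeriv_right_of_le hM
      (f := fun s => (s ^ n * Real.exp (-γ * s)) • T s x) (f' := D)
      (((scalar_cont n).continuousOn).smul ((hT.strong_cont x).mono
        (Icc_subset_Ici_self)))
      ?_ ?_
    · rw [key]
      simp only [hT.map_zero, ContinuousLinearMap.one_apply, mul_zero, neg_zero,
        Real.exp_zero, mul_one]
    · intro s hs
      have hs0 : (0:ℝ) ≤ s := hs.1.le
      have hexp : HasDerivAt (fun u : ℝ => Real.exp (-γ * u)) (-γ * Real.exp (-γ * s)) s := by
        simpa [mul_comm] using (((hasDerivAt_id s).const_mul (-γ)).exp)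
      have hsc : HasDerivAt (fun u : ℝ => u ^ n * Real.exp (-γ * u))
          ((n:ℝ) * s ^ (n-1) * Real.exp (-γ * s) + s ^ n * (-γ * Real.exp (-γ * s))) s :=
        (hasDerivAt_pow n s).mul hexp
      have hder := (hsc.hasDerivWithinAt (s := Ioi s)).smul (deriv_T hT hA hx hs0)
      convert hder using 1
      · rfl
      simp only [hD]
      module
    · rw [intervalIntegrable_iff_integrableOn_Icc_of_le hM]
      exact (hDcont.mono Icc_subset_Ici_self).integrableOn_compact isCompact_Icc
  have lim1 : Tendsto (fun M : ℝ => ∫ s in (0:ℝ)..M, D s) atTop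
      (𝓝 (∫ s in Ioi (0:ℝ), D s)) :=
    intervalIntegral_tendsto_integral_Ioi 0 hDint tendsto_id
  have lim2 : Tendsto (fun M : ℝ => ∫ s in (0:ℝ)..M, D s) atTop
      (𝓝 (0 - ((0:ℝ) ^ n) • x)) := by
    apply Tendsto.congr' _ ((boundary_tendsto hT hγ n x).sub_const (((0:ℝ) ^ n) • x))
    filter_upwards [eventually_ge_atTop (0:ℝ)] with M hM
    exact (hFTC M hM).symm
  have hint_eq : ∫ s in Ioi (0:ℝ), D s = 0 - ((0:ℝ) ^ n) • x :=
    tendsto_nhds_unique lim1 lim2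
  have hsplit : ∫ s in Ioi (0:ℝ), D s
      = Fn T γ n (A x) + (n : ℝ) • Fn T γ (n-1) x + (-γ) • Fn T γ n x := by
    simp only [hD]
    rw [integral_add i12 i3, integral_add i1 i2, integral_smul, integral_smul]
    rfl
  rw [← hsplit, hint_eq, zero_sub]

lemma Fn_linear (hT : IsC0Semigroup T N) (hγ : 0 < γ) (n : ℕ) (x : X) :
    Fn T γ n ((γ:ℂ) • x - A x) = γ • Fn T γ n x - Fn T γ n (A x) := by
  unfold Fn
  have h1 : (fun s : ℝ => (s ^ n * Real.exp (-γ * s)) • T s ((γ:ℂ) • x - A x))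
      = fun s : ℝ => γ • ((s ^ n * Real.exp (-γ * s)) • T s x)
        - (s ^ n * Real.exp (-γ * s)) • T s (A x) := by
    funext s
    rw [(T s).map_sub, (T s).map_smul, Complex.coe_smul, smul_sub, smul_comm]
  have j1 : IntegrableOn (fun s : ℝ => γ • ((s ^ n * Real.exp (-γ * s)) • T s x)) (Ioi 0) :=
    (vec_int hT hγ n x).smul γ
  rw [h1, integral_sub j1 (vec_int hT hγ n (A x)), integral_smul]

lemma Fn_eq_pow (hT : IsC0Semigroup T N) (hA : IsGeneratorOf A dom T) (hγ : 0 < γ)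
    {R : X →L[ℂ] X} (hR : IsResolventOf R (γ : ℂ) A dom) :
    ∀ (n : ℕ) (v : X), Fn T γ n v = (n.factorial : ℝ) • ((R ^ (n+1)) v) := by
  intro n
  induction n with
  | zero =>
    intro v
    obtain ⟨hdom, hres⟩ := hR.1 v
    have h := master hT hA hγ 0 hdom
    have hl := Fn_linear (A := A) hT hγ 0 (R v)
    rw [hres] at hl
    rw [hl, pow_one]
    simp only [pow_zero, Nat.cast_zero, zero_smul, one_smul, add_zero] at h
    simp only [Nat.factorial_zero, Nat.cast_one, one_smul]
    linear_combination (norm := module) -h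
  | succ n ih =>
    intro v
    obtain ⟨hdom, hres⟩ := hR.1 v
    have h := master hT hA hγ (n+1) hdom
    have hl := Fn_linear (A := A) hT hγ (n+1) (R v)
    rw [hres] at hl
    rw [hl]
    have h0 : ((0:ℝ) ^ (n+1)) = 0 := by simp
    rw [h0, zero_smul, neg_zero] at h
    have hstep : γ • Fn T γ (n+1) (R v) - Fn T γ (n+1) (A (R v))
        = ((n:ℝ)+1) • Fn T γ n (R v) := by
      have : (↑(n+1) : ℝ) = (n:ℝ)+1 := by push_cast; ring
      rw [← this]
      have hn1 : n + 1 - 1 = n := rfl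
      rw [hn1] at h
      linear_combination (norm := module) -h
    rw [hstep, ih (R v)]
    have hpow : (R ^ (n+1)) (R v) = (R ^ (n+2)) v := by
      rw [pow_succ]
      rfl
    rw [hpow, smul_smul]
    congr 1
    push_cast [Nat.factorial_succ]
    ring

lemma A_R (hR : IsResolventOf R (γ : ℂ) A dom) (y : X) :
    A (R y) = (γ:ℂ) • R y - y := by
  have := (hR.1 y).2
  linear_combination (norm := module) -this

lemma Apow (hR : IsResolventOf R (γ : ℂ) A dom) :
    ∀ (n : ℕ) (v : X), (A ^ n) ((R ^ (n+1)) v) =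
      ∑ k ∈ Finset.range (n+1),
        (((-1:ℝ)) ^ (n-k) * (n.choose k) * γ ^ k) • ((R ^ (k+1)) v) := by
  intro n
  induction n with
  | zero => intro v; simp
  | succ n ih =>
    intro v
    have e1 : (A ^ (n+1)) ((R ^ (n+2)) v) = (A ^ n) (A ((R ^ (n+2)) v)) := by
      rw [pow_succ, Module.End.mul_apply]
    have hAR : A ((R ^ (n+2)) v) = (γ:ℂ) • ((R ^ (n+2)) v) - (R ^ (n+1)) v := by
      have h1 : (R ^ (n+2)) v = R ((R ^ (n+1)) v) := by
        rw [pow_succ']; rfl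
      rw [h1, A_R hR, ← h1]
    rw [e1, hAR, map_sub, LinearMap.map_smul]
    have h2 : (A ^ n) ((R ^ (n+2)) v) = (A ^ n) ((R ^ (n+1)) (R v)) := by
      rw [pow_succ]; rfl
    rw [h2, ih (R v), ih v, Complex.coe_smul, Finset.smul_sum]
    have h3 : ∀ k, γ • ((((-1:ℝ)) ^ (n-k) * (n.choose k) * γ ^ k) • ((R ^ (k+1)) (R v)))
        = (((-1:ℝ)) ^ (n-k) * (n.choose k) * γ ^ (k+1)) • ((R ^ (k+2)) v) := by
      intro k
      rw [smul_smul]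
      have hp : (R ^ (k+1)) (R v) = (R ^ (k+2)) v := by rw [pow_succ]; rfl
      rw [hp]
      congr 1
      ring
    simp only [h3]
    rw [Finset.sum_range_succ'
        (fun k => ((((-1:ℝ)) ^ (n+1-k) * ((n+1).choose k) * γ ^ k) • ((R ^ (k+1)) v))),
      Finset.sum_range_succ'
        (fun k => ((((-1:ℝ)) ^ (n-k) * (n.choose k) * γ ^ k) • ((R ^ (k+1)) v)))]
    have hext : (∑ k ∈ Finset.range n,
          (((-1:ℝ)) ^ (n-(k+1)) * (n.choose (k+1)) * γ ^ (k+1)) • ((R ^ (k+1+1)) v))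
        = ∑ k ∈ Finset.range (n+1),
          (((-1:ℝ)) ^ (n-(k+1)) * (n.choose (k+1)) * γ ^ (k+1)) • ((R ^ (k+1+1)) v) := by
      rw [Finset.sum_range_succ]
      simp [Nat.choose_succ_self]
    rw [hext, sub_add_eq_sub_sub, ← Finset.sum_sub_distrib]
    have hcoef : ∀ k ∈ Finset.range (n+1),
        (((-1:ℝ)) ^ (n-k) * (n.choose k) * γ ^ (k+1)) • ((R ^ (k+2)) v)
          - (((-1:ℝ)) ^ (n-(k+1)) * (n.choose (k+1)) * γ ^ (k+1)) • ((R ^ (k+1+1)) v)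
        = (((-1:ℝ)) ^ (n+1-(k+1)) * ((n+1).choose (k+1)) * γ ^ (k+1)) • ((R ^ (k+1+1)) v) := by
      intro k hk
      rw [Finset.mem_range, Nat.lt_succ_iff] at hk
      rw [← sub_smul]
      congr 1
      rcases eq_or_lt_of_le hk with h | h
      · subst h
        simp [Nat.choose_succ_self, Nat.choose_self]
      · have h1 : n - k = (n - (k+1)) + 1 := by omega
        have h2 : n + 1 - (k+1) = n - k := by omega
        rw [h2, h1, pow_succ, Nat.choose_succ_succ, Nat.cast_add]
        ring
    rw [Finset.sum_congr rfl hcoef]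
    have hlast : (((-1:ℝ)) ^ (n+1-0) * ((n+1).choose 0) * γ ^ 0)
        = -(((-1:ℝ)) ^ (n-0) * (n.choose 0) * γ ^ 0) := by
      simp [pow_succ]
    rw [hlast, neg_smul, sub_eq_add_neg]


end Stmt11Aux

/-- `A^{m-1}(γ - A)^{-m} = ∫₀^∞ e^{sA} e^{-γs} (-1)^{m-1} L_{m-1}(γ s) ds`
(strongly). -/
theorem stmt_11 {X : Type*} [NormedAddCommGroup X] [NormedSpace ℂ X] [CompleteSpace X]
    (T : ℝ → X →L[ℂ] X) (N : ℝ) (hT : IsC0Semigroup T N)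
    (A : X →ₗ[ℂ] X) (dom : Set X) (hA : IsGeneratorOf A dom T)
    (γ : ℝ) (hγ : 0 < γ) (m : ℕ) (hm : 1 ≤ m)
    (R : X →L[ℂ] X) (hR : IsResolventOf R (γ : ℂ) A dom) :
    ∀ v : X, (A ^ (m - 1)) ((R ^ m) v) =
      ∫ s in Set.Ioi (0 : ℝ),
        ((Real.exp (-γ * s) * (-1) ^ (m - 1) * laguerre (m - 1) (γ * s) : ℝ) : ℂ) • T s v := by
  intro v
  obtain ⟨n, rfl⟩ : ∃ n, m = n + 1 := ⟨m - 1, (Nat.succ_pred_eq_of_pos hm).symm⟩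
  have hm1 : n + 1 - 1 = n := rfl
  rw [hm1]
  have hco : ∀ s : ℝ, ((Real.exp (-γ * s) * (-1) ^ n * laguerre n (γ * s) : ℝ) : ℂ) • T s v
      = ∑ k ∈ Finset.range (n+1),
          ((n.choose k : ℝ) * (-1) ^ (n+k) * γ ^ k / (k.factorial : ℝ)) •
            ((s ^ k * Real.exp (-γ * s)) • T s v) := by
    intro s
    rw [Complex.coe_smul, laguerre, Finset.mul_sum, Finset.sum_smul]
    apply Finset.sum_congr rfl
    intro k hk
    rw [smul_smul]
    congr 1
    rw [mul_pow, pow_add]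
    ring
  simp only [hco]
  have hint : ∀ k ∈ Finset.range (n+1), Integrable (fun s : ℝ =>
      ((n.choose k : ℝ) * (-1) ^ (n+k) * γ ^ k / (k.factorial : ℝ)) •
        ((s ^ k * Real.exp (-γ * s)) • T s v)) (MeasureTheory.volume.restrict (Set.Ioi 0)) :=
    fun k _ => (Stmt11Aux.vec_int hT hγ k v).smul _
  rw [MeasureTheory.integral_finset_sum _ hint]
  simp only [MeasureTheory.integral_smul]
  have hFn : ∀ k : ℕ, (∫ s in Set.Ioi (0:ℝ), (s ^ k * Real.exp (-γ * s)) • T s v)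
      = (k.factorial : ℝ) • ((R ^ (k+1)) v) :=
    fun k => Stmt11Aux.Fn_eq_pow hT hA hγ hR k v
  simp only [hFn]
  rw [Stmt11Aux.Apow hR n v]
  apply Finset.sum_congr rfl
  intro k hk
  rw [Finset.mem_range, Nat.lt_succ_iff] at hk
  rw [smul_smul]
  congr 1
  have h1 : n + k = (n - k) + 2 * k := by omega
  have h2 : ((-1:ℝ)) ^ (n+k) = ((-1:ℝ)) ^ (n-k) := by
    rw [h1, pow_add, pow_mul]
    simp
  rw [h2]
  have h3 : (k.factorial : ℝ) ≠ 0 := Nat.cast_ne_zero.mpr k.factorial_ne_zero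
  field_simp
end

section
/- Let A generate a contraction C_0-semigroup on a Hilbert space H, fix γ > 0 and v ∈ 𝒟(A), let P_n be the orthogonal projection onto the resolvent Krylov subspace 𝒦_n((γ-A)^{-1}, v) ⊆ 𝒟(A), and A_n = P_n A P_n. Then the Krylov approximation is exact for rational functions with denominator (γ - z)^{n-1}: for every polynomial p of degree ≤ n-1, p(A)(γ-A)^{-(n-1)} v = p(A_n)(γ - A_n)^{-(n-1)} v. -/
open Filter Topology MeasureTheory

/-- Exactness of the resolvent Krylov approximation for rational functions with
denominator `(γ-z)^{n-1}`: with `P_n` the orthogonal projection onto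
`𝒦_n((γ-A)^{-1}, v) ⊆ 𝒟(A)`, `A_n = P_n A P_n`, and `(γ - A_n)^{-1}` its resolvent on `𝒦_n`,
for every polynomial `p` of degree ≤ n-1: `p(A)(γ-A)^{-(n-1)} v = p(A_n)(γ-A_n)^{-(n-1)} v`. -/
theorem stmt_19 {H : Type*} [NormedAddCommGroup H] [InnerProductSpace ℂ H] [CompleteSpace H]
    (T : ℝ → H →L[ℂ] H) (hT : IsC0Semigroup T 1)
    (A : H →ₗ[ℂ] H) (dom : Set H) (hA : IsGeneratorOf A dom T)
    (γ : ℝ) (hγ : 0 < γ) (R : H →L[ℂ] H) (hR : IsResolventOf R (γ : ℂ) A dom)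
    (v : H) (hv : v ∈ dom) (n : ℕ) (hn : 1 ≤ n)
    (K : Submodule ℂ H)
    (hK : K = Submodule.span ℂ (Set.range fun k : Fin n => (R ^ (k : ℕ)) v))
    [FiniteDimensional ℂ K] (hKdom : (K : Set H) ⊆ dom)
    (P : H →L[ℂ] H) (hP : ∀ x : H, P x = (Submodule.orthogonalProjectionOnto K x : H))
    (An : H →L[ℂ] H) (hAn : ∀ x : H, An x = P (A (P x)))
    (Rn : H →L[ℂ] H)
    (hRn1 : ∀ x ∈ K, Rn x ∈ K ∧ (γ : ℂ) • Rn x - An (Rn x) = x)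
    (hRn2 : ∀ x ∈ K, Rn ((γ : ℂ) • x - An x) = x)
    (p : Polynomial ℂ) (hp : p.natDegree ≤ n - 1) :
    (Polynomial.aeval (A : Module.End ℂ H) p) ((R ^ (n - 1)) v)
      = (Polynomial.aeval (An.toLinearMap : Module.End ℂ H) p) ((Rn ^ (n - 1)) v) := by
  classical
  obtain ⟨m, rfl⟩ : ∃ m, n = m + 1 := ⟨n - 1, by omega⟩
  simp only [Nat.add_sub_cancel] at hp ⊢
  set w : ℕ → H := fun k => (R ^ k) v with hw
  have hwK : ∀ k, k ≤ m → w k ∈ K := by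
    intro k hk
    rw [hK]
    exact Submodule.subset_span ⟨⟨k, by omega⟩, rfl⟩
  have hPfix : ∀ x ∈ K, P x = x := by
    intro x hx
    rw [hP]
    exact Submodule.starProjection_eq_self_iff.mpr hx
  have hres : ∀ x : H, A (R x) = (γ : ℂ) • R x - x := by
    intro x
    have h := (hR.1 x).2
    have h2 := congrArg (fun y => (γ : ℂ) • R x - y) h
    simpa using h2
  have hwsucc : ∀ k, w (k + 1) = R (w k) := by
    intro k
    simp only [hw, pow_succ', ContinuousLinearMap.mul_apply]
  have hAw : ∀ k, A (w (k + 1)) = (γ : ℂ) • w (k + 1) - w k := by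
    intro k
    rw [hwsucc k]
    exact hres (w k)
  set S : ℕ → Submodule ℂ H :=
    fun k => Submodule.span ℂ (Set.range fun i : Fin (m + 1 - k) => w (k + i)) with hS
  have hSK : ∀ k, S k ≤ K := by
    intro k
    rw [hS]
    refine Submodule.span_le.mpr ?_
    rintro x ⟨i, rfl⟩
    exact hwK (k + i) (by have := i.isLt; omega)
  have hAS : ∀ k x, x ∈ S (k + 1) → A x ∈ S k := by
    intro k x hx
    induction hx using Submodule.span_induction with
    | mem y hy =>
      obtain ⟨i, rfl⟩ := hy
      have hi := i.isLt
      show A (w (k + 1 + (i : ℕ))) ∈ S k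
      rw [add_right_comm k 1 (i : ℕ), hAw]
      refine sub_mem (Submodule.smul_mem _ _ ?_) ?_
      · exact Submodule.subset_span ⟨⟨(i : ℕ) + 1, by omega⟩, by show w (k + ((i : ℕ) + 1)) = w (k + (i : ℕ) + 1); rw [← add_assoc]⟩
      · exact Submodule.subset_span ⟨⟨(i : ℕ), by omega⟩, rfl⟩
    | zero => simp
    | add y z _ _ hy hz => simpa [map_add] using add_mem hy hz
    | smul c y _ hy => simpa [_root_.map_smul] using Submodule.smul_mem _ c hy
  have key : ∀ j, j ≤ m →
      ((A : Module.End ℂ H) ^ j) (w m) ∈ S (m - j) ∧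
      ((A : Module.End ℂ H) ^ j) (w m) = ((An.toLinearMap : Module.End ℂ H) ^ j) (w m) := by
    intro j
    induction j with
    | zero =>
      intro _
      refine ⟨?_, by simp⟩
      simp only [pow_zero, Module.End.one_apply, Nat.sub_zero]
      exact Submodule.subset_span ⟨⟨0, by omega⟩, by simp⟩
    | succ j ih =>
      intro hj
      obtain ⟨h1, h2⟩ := ih (by omega)
      have e : m - j = (m - (j + 1)) + 1 := by omega
      rw [e] at h1
      have hx : A (((A : Module.End ℂ H) ^ j) (w m)) ∈ S (m - (j + 1)) := hAS _ _ h1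
      have hmemK : ((A : Module.End ℂ H) ^ j) (w m) ∈ K := hSK _ (e ▸ h1)
      constructor
      · rw [pow_succ', Module.End.mul_apply]
        exact hx
      · rw [pow_succ', Module.End.mul_apply, pow_succ', Module.End.mul_apply, ← h2]
        have : An (((A : Module.End ℂ H) ^ j) (w m)) = A (((A : Module.End ℂ H) ^ j) (w m)) := by
          rw [hAn, hPfix _ hmemK, hPfix _ (hSK _ hx)]
        rw [ContinuousLinearMap.coe_coe, this]
  have hRnpow : ∀ k, k ≤ m → (Rn ^ k) v = (R ^ k) v := by
    intro k
    induction k with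
    | zero => intro _; simp
    | succ k ih =>
      intro hk
      have hwk1K : w (k + 1) ∈ K := hwK _ hk
      have hAnw : An (w (k + 1)) = (γ : ℂ) • w (k + 1) - w k := by
        rw [hAn, hPfix _ hwk1K, hAw, map_sub, _root_.map_smul, hPfix _ hwk1K,
          hPfix _ (hwK k (by omega))]
      have h3 : (γ : ℂ) • w (k + 1) - An (w (k + 1)) = w k := by
        rw [hAnw, sub_sub_cancel]
      have h4 := hRn2 (w (k + 1)) hwk1K
      rw [h3] at h4
      calc (Rn ^ (k + 1)) v = Rn ((Rn ^ k) v) := by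
            rw [pow_succ', ContinuousLinearMap.mul_apply]
        _ = Rn (w k) := by rw [ih (by omega)]
        _ = w (k + 1) := h4
  rw [hRnpow m le_rfl]
  show (Polynomial.aeval (A : Module.End ℂ H) p) (w m)
      = (Polynomial.aeval (An.toLinearMap : Module.End ℂ H) p) (w m)
  rw [Polynomial.aeval_eq_sum_range, Polynomial.aeval_eq_sum_range]
  simp only [LinearMap.coe_sum, Finset.sum_apply, LinearMap.smul_apply]
  refine Finset.sum_congr rfl fun i hi => ?_
  rw [(key i (by simp only [Finset.mem_range] at hi; omega)).2]
end
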